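/- arXiv:2010.10751 — 4 statements merged into one kernel-verified Lean document; each statement's English description precedes it below -/
import Mathlib

section
/- Let (S, d) be a complete separable metric space, C ⊆ S a closed subset, (ε_n) a sequence of positive reals, and ν a measure in M(S \ C). Suppose X_n and Y_n are S-valued random elements such that ε_n^{-1} P(X_n ∈ ·) → ν(·) in M(S \ C), and for every δ > 0 and γ > 0 one has limsup_n ε_n^{-1} P(X_n ∈ (S \ C)^{-γ}, d(X_n, Y_n) ≥ δ) = 0 and limsup_n ε_n^{-1} P(Y_n ∈ (S \ C)^{-γ}, d(X_n, Y_n) ≥ δ) = 0. Then ε_n^{-1} P(Y_n ∈ ·) → ν(·) in M(S \ C). -/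
open MeasureTheory Filter Set Topology Metric

/-- If `limsup v = 0` then `limsup (u + v) ≤ limsup u` in `ℝ≥0∞`. -/
lemma ennreal_limsup_add_le_of_limsup_eq_zero (u v : ℕ → ENNReal)
    (hv : Filter.limsup v atTop = 0) :
    Filter.limsup (fun n => u n + v n) atTop ≤ Filter.limsup u atTop := by
  apply ENNReal.le_of_forall_pos_le_add
  intro c hc _
  have hvc : ∀ᶠ n in atTop, v n < (c : ENNReal) := by
    refine eventually_lt_of_limsup_lt ?_ ⟨⊤, Filter.Eventually.of_forall fun _ => le_top⟩
    rw [hv]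
    exact_mod_cast hc
  calc Filter.limsup (fun n => u n + v n) atTop
      ≤ Filter.limsup (fun n => u n + (c : ENNReal)) atTop := by
        refine limsup_le_limsup ?_
        filter_upwards [hvc] with n hn
        exact add_le_add le_rfl hn.le
    _ = Filter.limsup u atTop + (c : ENNReal) := by
        exact limsup_add_const atTop u _
          ⟨⊤, Filter.Eventually.of_forall fun _ => le_top⟩ isCobounded_le_of_bot

/-- If `limsup v = 0` then `liminf (u + v) ≤ liminf u` in `ℝ≥0∞`. -/
lemma ennreal_liminf_add_le_of_limsup_eq_zero (u v : ℕ → ENNReal)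
    (hv : Filter.limsup v atTop = 0) :
    Filter.liminf (fun n => u n + v n) atTop ≤ Filter.liminf u atTop := by
  apply ENNReal.le_of_forall_pos_le_add
  intro c hc _
  have hvc : ∀ᶠ n in atTop, v n < (c : ENNReal) := by
    refine eventually_lt_of_limsup_lt ?_ ⟨⊤, Filter.Eventually.of_forall fun _ => le_top⟩
    rw [hv]
    exact_mod_cast hc
  calc Filter.liminf (fun n => u n + v n) atTop
      ≤ Filter.liminf (fun n => u n + (c : ENNReal)) atTop := by
        refine liminf_le_liminf ?_
        filter_upwards [hvc] with n hn
        exact add_le_add le_rfl hn.le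
    _ = Filter.liminf u atTop + (c : ENNReal) := by
        exact liminf_add_const atTop u _ isCobounded_ge_of_top
          ⟨0, Filter.Eventually.of_forall fun _ => zero_le⟩

/-- **M-convergence transfer along asymptotic equivalence** (Lemma 2.2 / `lem: asymptotic
equivalence`).  Let `(S, d)` be a complete separable metric space, `C ⊆ S` closed, `ε n > 0`,
and `ν` a measure in `M(S \ C)` (finite outside every enlargement of `C`).  If
`εₙ⁻¹ P(Xₙ ∈ ·) → ν` in `M(S \ C)` (expressed via the closed/open set characterization of
M-convergence, for sets bounded away from `C`), and `Xₙ`, `Yₙ` are asymptotically equivalent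
with respect to `εₙ` and `C`, then `εₙ⁻¹ P(Yₙ ∈ ·) → ν` in `M(S \ C)` as well.
Here `(S \ C)^{-γ} = {x : infDist x C > γ}`. -/
theorem mConvergence_of_asymptotic_equivalence
    {S : Type*} [MetricSpace S] [CompleteSpace S] [TopologicalSpace.SeparableSpace S]
    [MeasurableSpace S] [BorelSpace S]
    (C : Set S) (hC : IsClosed C)
    (ε : ℕ → ℝ) (hε : ∀ n, 0 < ε n)
    (ν : Measure S) (hν : ∀ r : ℝ, 0 < r → ν {x | r ≤ Metric.infDist x C} < ⊤)
    {Ω : Type*} [MeasurableSpace Ω] (μ : Measure Ω) [IsProbabilityMeasure μ]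
    (X Y : ℕ → Ω → S) (hX : ∀ n, Measurable (X n)) (hY : ∀ n, Measurable (Y n))
    (hupperX : ∀ F : Set S, IsClosed F → (∃ r > 0, ∀ x ∈ F, r ≤ Metric.infDist x C) →
      Filter.limsup (fun n => μ (X n ⁻¹' F) / ENNReal.ofReal (ε n)) atTop ≤ ν F)
    (hlowerX : ∀ G : Set S, IsOpen G → (∃ r > 0, ∀ x ∈ G, r ≤ Metric.infDist x C) →
      ν G ≤ Filter.liminf (fun n => μ (X n ⁻¹' G) / ENNReal.ofReal (ε n)) atTop)
    (hXY : ∀ δ γ : ℝ, 0 < δ → 0 < γ →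
      Filter.limsup (fun n =>
        μ {ω | γ < Metric.infDist (X n ω) C ∧ δ ≤ dist (X n ω) (Y n ω)} /
          ENNReal.ofReal (ε n)) atTop = 0)
    (hYX : ∀ δ γ : ℝ, 0 < δ → 0 < γ →
      Filter.limsup (fun n =>
        μ {ω | γ < Metric.infDist (Y n ω) C ∧ δ ≤ dist (X n ω) (Y n ω)} /
          ENNReal.ofReal (ε n)) atTop = 0) :
    (∀ F : Set S, IsClosed F → (∃ r > 0, ∀ x ∈ F, r ≤ Metric.infDist x C) →
      Filter.limsup (fun n => μ (Y n ⁻¹' F) / ENNReal.ofReal (ε n)) atTop ≤ ν F) ∧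
    (∀ G : Set S, IsOpen G → (∃ r > 0, ∀ x ∈ G, r ≤ Metric.infDist x C) →
      ν G ≤ Filter.liminf (fun n => μ (Y n ⁻¹' G) / ENNReal.ofReal (ε n)) atTop) := by
  constructor
  · -- upper bound for closed sets
    rintro F hF ⟨r, hr, hFr⟩
    rcases F.eq_empty_or_nonempty with rfl | hFne
    · simp
    -- the sequence of shrinking enlargement radii
    set d : ℕ → ℝ := fun k => r / 4 * (1 / (k + 1)) with hd
    have hdpos : ∀ k, 0 < d k := fun k => by positivity
    have hdle : ∀ k, d k ≤ r / 4 := by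
      intro k
      have h1 : (1 : ℝ) / (k + 1) ≤ 1 := by
        rw [div_le_one (by positivity)]
        exact le_add_of_nonneg_left (Nat.cast_nonneg k)
      calc d k ≤ r / 4 * 1 := by
            apply mul_le_mul_of_nonneg_left h1 (by linarith)
        _ = r / 4 := mul_one _
    have hdanti : Antitone d := by
      intro k m hkm
      apply mul_le_mul_of_nonneg_left _ (by linarith : (0:ℝ) ≤ r / 4)
      have hkm' : (k : ℝ) + 1 ≤ (m : ℝ) + 1 := by
        have : (k : ℝ) ≤ m := Nat.cast_le.mpr hkm
        linarith
      exact div_le_div_of_nonneg_left one_pos.le (by positivity) hkm'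
    have hdtend : Filter.Tendsto d atTop (nhds 0) := by
      have h := tendsto_one_div_add_atTop_nhds_zero_nat.const_mul (r / 4)
      rw [hd]
      simpa using h
    -- the enlarged sets
    set s : ℕ → Set S := fun k => {x | infDist x F ≤ d k} with hs
    have hscl : ∀ k, IsClosed (s k) :=
      fun k => isClosed_le (continuous_infDist_pt F) continuous_const
    have hsaway : ∀ k, ∀ x ∈ s k, r / 2 ≤ infDist x C := by
      intro k x hx
      have hlt : infDist x F < 2 * d k := lt_of_le_of_lt hx (by linarith [hdpos k])
      obtain ⟨y, hyF, hxy⟩ := (infDist_lt_iff hFne).mp hlt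
      have h1 : r ≤ infDist y C := hFr y hyF
      have h2 : infDist y C ≤ infDist x C + dist y x := infDist_le_infDist_add_dist
      have h3 : dist y x < r / 2 := by
        rw [dist_comm]; linarith [hdle k]
      linarith
    have hFs : ∀ k, F ⊆ s k := by
      intro k x hx
      simp only [hs, mem_setOf_eq, infDist_zero_of_mem hx]
      exact (hdpos k).le
    -- key bound for each k
    have hk : ∀ k, Filter.limsup (fun n => μ (Y n ⁻¹' F) / ENNReal.ofReal (ε n)) atTop
        ≤ ν (s k) := by
      intro k
      have hsub : ∀ n, Y n ⁻¹' F ⊆ X n ⁻¹' s k ∪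
          {ω | r / 2 < infDist (Y n ω) C ∧ d k ≤ dist (X n ω) (Y n ω)} := by
        intro n ω hω
        by_cases hdist : dist (X n ω) (Y n ω) < d k
        · left
          show infDist (X n ω) F ≤ d k
          exact le_trans (infDist_le_dist_of_mem hω) hdist.le
        · right
          exact ⟨lt_of_lt_of_le (by linarith) (hFr _ hω), le_of_not_gt hdist⟩
      have hmeas : ∀ n, μ (Y n ⁻¹' F) / ENNReal.ofReal (ε n) ≤
          μ (X n ⁻¹' s k) / ENNReal.ofReal (ε n) +
          μ {ω | r / 2 < infDist (Y n ω) C ∧ d k ≤ dist (X n ω) (Y n ω)}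
            / ENNReal.ofReal (ε n) := by
        intro n
        rw [← ENNReal.add_div]
        apply ENNReal.div_le_div_right
        exact le_trans (measure_mono (hsub n)) (measure_union_le _ _)
      calc Filter.limsup (fun n => μ (Y n ⁻¹' F) / ENNReal.ofReal (ε n)) atTop
          ≤ Filter.limsup (fun n =>
              μ (X n ⁻¹' s k) / ENNReal.ofReal (ε n) +
              μ {ω | r / 2 < infDist (Y n ω) C ∧ d k ≤ dist (X n ω) (Y n ω)}
                / ENNReal.ofReal (ε n)) atTop :=
            limsup_le_limsup (Filter.Eventually.of_forall hmeas)
        _ ≤ Filter.limsup (fun n => μ (X n ⁻¹' s k) / ENNReal.ofReal (ε n)) atTop :=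
            ennreal_limsup_add_le_of_limsup_eq_zero _ _
              (hYX (d k) (r / 2) (hdpos k) (by linarith))
        _ ≤ ν (s k) := hupperX (s k) (hscl k) ⟨r / 2, by linarith, hsaway k⟩
    -- pass to the limit in k
    have hInter : ⋂ k, s k = F := by
      apply Subset.antisymm
      · intro x hx
        simp only [mem_iInter] at hx
        have h0 : infDist x F ≤ 0 := ge_of_tendsto' hdtend fun k => hx k
        have : infDist x F = 0 := le_antisymm h0 infDist_nonneg
        exact (hF.mem_iff_infDist_zero hFne).mpr this
      · exact fun x hx => mem_iInter.mpr fun k => hFs k hx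
    have hfin : ∃ k, ν (s k) ≠ ⊤ := by
      refine ⟨0, ?_⟩
      have : ν (s 0) ≤ ν {x | r / 2 ≤ infDist x C} := measure_mono (hsaway 0)
      exact (lt_of_le_of_lt this (hν (r / 2) (by linarith))).ne
    have htend : Filter.Tendsto (fun k => ν (s k)) atTop (nhds (ν F)) := by
      have := tendsto_measure_iInter_atTop (μ := ν)
        (fun k => (hscl k).measurableSet.nullMeasurableSet)
        (fun k m hkm => fun x hx => le_trans hx (hdanti hkm)) hfin
      rwa [hInter] at this
    exact ge_of_tendsto' htend hk
  · -- lower bound for open sets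
    rintro G hG ⟨r, hr, hGr⟩
    rcases G.eq_empty_or_nonempty with rfl | hGne
    · simp
    -- the complement of G is a nonempty closed set
    have hCne : C.Nonempty := by
      by_contra hc
      obtain ⟨x, hx⟩ := hGne
      have := hGr x hx
      rw [not_nonempty_iff_eq_empty.mp hc, infDist_empty] at this
      linarith
    have hGcne : Gᶜ.Nonempty := by
      obtain ⟨c, hc⟩ := hCne
      refine ⟨c, fun hcG => ?_⟩
      have := hGr c hcG
      rw [infDist_zero_of_mem hc] at this
      linarith
    set d : ℕ → ℝ := fun k => 1 / (k + 1) with hd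
    have hdpos : ∀ k, 0 < d k := fun k => by positivity
    have hdanti : Antitone d := by
      intro k m hkm
      have hkm' : (k : ℝ) + 1 ≤ (m : ℝ) + 1 := by
        have : (k : ℝ) ≤ m := Nat.cast_le.mpr hkm
        linarith
      exact div_le_div_of_nonneg_left one_pos.le (by positivity) hkm'
    have hdtend : Filter.Tendsto d atTop (nhds 0) :=
      tendsto_one_div_add_atTop_nhds_zero_nat
    set s : ℕ → Set S := fun k => {x | d k < infDist x Gᶜ} with hs
    have hsopen : ∀ k, IsOpen (s k) :=
      fun k => isOpen_lt continuous_const (continuous_infDist_pt Gᶜ)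
    have hsG : ∀ k, s k ⊆ G := by
      intro k x hx
      by_contra hxG
      have : infDist x Gᶜ = 0 := infDist_zero_of_mem hxG
      have h2 : d k < infDist x Gᶜ := hx
      rw [this] at h2
      exact absurd h2 (not_lt.mpr (hdpos k).le)
    have hsmono : Monotone s := by
      intro k m hkm x hx
      exact lt_of_le_of_lt (hdanti hkm) hx
    have hUnion : ⋃ k, s k = G := by
      apply Subset.antisymm
      · exact iUnion_subset hsG
      · intro x hx
        have hpos : 0 < infDist x Gᶜ :=
          (hG.isClosed_compl.notMem_iff_infDist_pos hGcne).mp (fun h => h hx)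
        obtain ⟨k, hk⟩ := ((hdtend.eventually (eventually_lt_nhds hpos)).and
          (eventually_atTop.mpr ⟨0, fun n _ => trivial⟩)).exists
        exact mem_iUnion.mpr ⟨k, hk.1⟩
    -- key bound for each k
    have hk : ∀ k, ν (s k) ≤
        Filter.liminf (fun n => μ (Y n ⁻¹' G) / ENNReal.ofReal (ε n)) atTop := by
      intro k
      have hsub : ∀ n, X n ⁻¹' s k ⊆ Y n ⁻¹' G ∪
          {ω | r / 2 < infDist (X n ω) C ∧ d k ≤ dist (X n ω) (Y n ω)} := by
        intro n ω hω
        by_cases hdist : dist (X n ω) (Y n ω) < d k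
        · left
          show Y n ω ∈ G
          by_contra hYnG
          have : infDist (X n ω) Gᶜ ≤ dist (X n ω) (Y n ω) :=
            infDist_le_dist_of_mem hYnG
          have h2 : d k < infDist (X n ω) Gᶜ := hω
          linarith
        · right
          exact ⟨lt_of_lt_of_le (by linarith) (hGr _ (hsG k hω)), le_of_not_gt hdist⟩
      have hmeas : ∀ n, μ (X n ⁻¹' s k) / ENNReal.ofReal (ε n) ≤
          μ (Y n ⁻¹' G) / ENNReal.ofReal (ε n) +
          μ {ω | r / 2 < infDist (X n ω) C ∧ d k ≤ dist (X n ω) (Y n ω)}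
            / ENNReal.ofReal (ε n) := by
        intro n
        rw [← ENNReal.add_div]
        apply ENNReal.div_le_div_right
        exact le_trans (measure_mono (hsub n)) (measure_union_le _ _)
      calc ν (s k)
          ≤ Filter.liminf (fun n => μ (X n ⁻¹' s k) / ENNReal.ofReal (ε n)) atTop :=
            hlowerX (s k) (hsopen k) ⟨r, hr, fun x hx => hGr x (hsG k hx)⟩
        _ ≤ Filter.liminf (fun n =>
              μ (Y n ⁻¹' G) / ENNReal.ofReal (ε n) +
              μ {ω | r / 2 < infDist (X n ω) C ∧ d k ≤ dist (X n ω) (Y n ω)}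
                / ENNReal.ofReal (ε n)) atTop :=
            liminf_le_liminf (Filter.Eventually.of_forall hmeas)
        _ ≤ Filter.liminf (fun n => μ (Y n ⁻¹' G) / ENNReal.ofReal (ε n)) atTop :=
            ennreal_liminf_add_le_of_limsup_eq_zero _ _
              (hXY (d k) (r / 2) (hdpos k) (by linarith))
    -- pass to the limit in k
    have htend : Filter.Tendsto (fun k => ν (s k)) atTop (nhds (ν G)) := by
      have := tendsto_measure_iUnion_atTop (μ := ν) hsmono
      rwa [hUnion] at this
    exact le_of_tendsto' htend hk
end

section
/- Suppose there exist intervals I_1 = (a_0 − δ, a_0 + δ) and I_2 = (b_1, b_2), a σ-finite measure ν_0 with a_0 in its support, and a constant c_0 > 0 such that P((A_1, B_1) ∈ D_1 × D_2) ≥ c_0 ν_0(D_1 ∩ I_1)·|D_2 ∩ I_2| for all Borel sets D_1, D_2 ⊆ ℝ. Then for x_0 = 0 there exist ε > 0 and θ > 0 such that the transition kernel P(x,E) = P(A_1 x + B_1 ∈ E) satisfies P(x,E) ≥ θ |E ∩ E_0| for all x ∈ B_ε(0) and Borel E, where E_0 = (b_1 + ε(|a_0−δ| ∨ |a_0+δ|),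 b_2 − ε(|a_0−δ| ∨ |a_0+δ|)), which is nonempty provided ε < (b_2−b_1)/(2(|a_0−δ| ∨ |a_0+δ|)). One may take θ = c_0 ν_0(I_1) > 0. -/
open MeasureTheory Set Metric
open scoped ENNReal

/-- If two finite measures on `ℝ × ℝ` satisfy `σ ≤ π` on all closed balls, then `σ ≤ π`
on all measurable sets, by Besicovitch differentiation. -/
lemma le_on_measurable_of_closedBall_le {σ π : Measure (ℝ × ℝ)}
    [IsFiniteMeasure σ] [IsFiniteMeasure π]
    (h : ∀ z r, σ (closedBall z r) ≤ π (closedBall z r)) :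
    ∀ s : Set (ℝ × ℝ), MeasurableSet s → σ s ≤ π s := by
  have hN : σ {z : ℝ × ℝ | ∃ r > 0, σ (closedBall z r) = 0} = 0 := by
    apply measure_null_of_locally_null
    rintro x ⟨r, hr, hr0⟩
    refine ⟨{z : ℝ × ℝ | ∃ r > 0, σ (closedBall z r) = 0} ∩ closedBall x r, ?_, ?_⟩
    · exact inter_mem_nhdsWithin _ (closedBall_mem_nhds x hr)
    · exact measure_mono_null inter_subset_right hr0
  have h2 : ∀ᵐ z ∂σ, ∀ r > 0, σ (closedBall z r) ≠ 0 := by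
    rw [ae_iff]
    convert hN using 3 with z
    push_neg
    tauto
  have h1 := Besicovitch.ae_tendsto_rnDeriv π σ
  have key : ∀ᵐ z ∂σ, 1 ≤ π.rnDeriv σ z := by
    filter_upwards [h1, h2] with z hz hz'
    refine ge_of_tendsto hz ?_
    filter_upwards [self_mem_nhdsWithin] with r hr
    have h0 : σ (closedBall z r) ≠ 0 := hz' r hr
    rw [ENNReal.le_div_iff_mul_le (Or.inl h0) (Or.inl (measure_ne_top _ _)), one_mul]
    exact h z r
  intro s hs
  calc σ s = ∫⁻ _ in s, 1 ∂σ := by rw [setLIntegral_one]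
    _ ≤ ∫⁻ z in s, π.rnDeriv σ z ∂σ := lintegral_mono_ae (ae_restrict_of_ae key)
    _ = σ.withDensity (π.rnDeriv σ) s := (withDensity_apply _ hs).symm
    _ ≤ π s := Measure.le_iff'.mp (Measure.withDensity_rnDeriv_le π σ) s

/-- **Proposition 2.1, part 2 for `x₀ = 0` (`prop: conditions for minorization`)**: if
`P((A₁,B₁) ∈ D₁ × D₂) ≥ c₀ ν₀(D₁ ∩ I₁) |D₂ ∩ I₂|` with `I₁ = (a₀−δ, a₀+δ)`,
`I₂ = (b₁, b₂)`, `ν₀` σ-finite with `a₀` in its support, then there exist `ε > 0`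
(with `ε < (b₂−b₁)/(2(|a₀−δ| ∨ |a₀+δ|))`) and `θ > 0` (one may take `θ = c₀ ν₀(I₁)`) such
that the kernel `P(x,E) = P(A₁ x + B₁ ∈ E)` satisfies `P(x,E) ≥ θ |E ∩ E₀|` for all
`x ∈ B_ε(0)` and Borel `E`, with `E₀ = (b₁ + ε(|a₀−δ| ∨ |a₀+δ|), b₂ − ε(|a₀−δ| ∨ |a₀+δ|))`. -/
theorem minorization_near_zero
    {Ω : Type*} [MeasurableSpace Ω] (μ : Measure Ω) [IsProbabilityMeasure μ]
    (A B : Ω → ℝ) (hmA : Measurable A) (hmB : Measurable B)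
    (a₀ δ b₁ b₂ c₀ : ℝ) (hδ : 0 < δ) (hb : b₁ < b₂) (hc₀ : 0 < c₀)
    (ν₀ : Measure ℝ) [SigmaFinite ν₀]
    (hsupp : ∀ U : Set ℝ, IsOpen U → a₀ ∈ U → 0 < ν₀ U)
    (hminor : ∀ D₁ D₂ : Set ℝ, MeasurableSet D₁ → MeasurableSet D₂ →
      c₀ * (ν₀ (D₁ ∩ Ioo (a₀ - δ) (a₀ + δ))).toReal * (volume (D₂ ∩ Ioo b₁ b₂)).toReal
        ≤ (μ {ω | (A ω, B ω) ∈ D₁ ×ˢ D₂}).toReal) :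
    ∃ ε > (0:ℝ), ε < (b₂ - b₁) / (2 * max |a₀ - δ| |a₀ + δ|) ∧ ∃ θ > (0:ℝ),
      ∀ x ∈ Metric.ball (0:ℝ) ε, ∀ E : Set ℝ, MeasurableSet E →
        θ * (volume (E ∩ Ioo (b₁ + ε * max |a₀ - δ| |a₀ + δ|)
            (b₂ - ε * max |a₀ - δ| |a₀ + δ|))).toReal
          ≤ (μ {ω | A ω * x + B ω ∈ E}).toReal := by
  set M := max |a₀ - δ| |a₀ + δ| with hMdef
  have habs1 : a₀ + δ ≤ M := (le_abs_self _).trans (le_max_right _ _)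
  have habs2 : δ - a₀ ≤ M := (le_trans (by rw [abs_sub_comm]; exact le_abs_self _)
    (le_max_left _ _))
  have hM0 : 0 < M := by rcases le_or_gt a₀ 0 with h | h <;> linarith
  set ε := (b₂ - b₁) / (4 * M) with hεdef
  have hε0 : 0 < ε := div_pos (by linarith) (by linarith)
  have hεlt : ε < (b₂ - b₁) / (2 * M) :=
    div_lt_div_of_pos_left (by linarith) (by linarith) (by linarith)
  have hεM : 4 * (ε * M) = b₂ - b₁ := by
    rw [hεdef]
    field_simp
  set I₁ := Ioo (a₀ - δ) (a₀ + δ) with hI₁def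
  have hI₁pos : 0 < ν₀ I₁ := hsupp _ isOpen_Ioo ⟨by linarith, by linarith⟩
  obtain ⟨n, hn⟩ : ∃ n, 0 < ν₀ (I₁ ∩ spanningSets ν₀ n) := by
    by_contra hcon
    push_neg at hcon
    simp only [le_zero_iff] at hcon
    have hI : I₁ = ⋃ n, I₁ ∩ spanningSets ν₀ n := by
      rw [← inter_iUnion, iUnion_spanningSets, inter_univ]
    exact hI₁pos.ne' (by rw [hI]; exact measure_iUnion_null hcon)
  set D := I₁ ∩ spanningSets ν₀ n with hDdef
  have hDm : MeasurableSet D := measurableSet_Ioo.inter (measurableSet_spanningSets ν₀ n)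
  have hDsub : D ⊆ I₁ := inter_subset_left
  have hDfin : ν₀ D < ∞ :=
    lt_of_le_of_lt (measure_mono inter_subset_right) (measure_spanningSets_lt_top ν₀ n)
  set θ := c₀ * (ν₀ D).toReal with hθdef
  have hθ0 : 0 < θ := mul_pos hc₀ (ENNReal.toReal_pos hn.ne' hDfin.ne)
  -- the joint law and the minorizing product measure
  have hABm : Measurable fun ω => (A ω, B ω) := hmA.prodMk hmB
  set ρ := μ.map (fun ω => (A ω, B ω)) with hρdef
  haveI hρfin : IsFiniteMeasure ρ :=
    ⟨by rw [hρdef, Measure.map_apply hABm MeasurableSet.univ]; exact measure_lt_top μ _⟩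
  haveI : IsFiniteMeasure (ν₀.restrict D) := ⟨by rwa [Measure.restrict_apply_univ]⟩
  haveI : IsFiniteMeasure (volume.restrict (Ioo b₁ b₂)) :=
    ⟨by rw [Measure.restrict_apply_univ]; exact measure_Ioo_lt_top⟩
  set σm := (ENNReal.ofReal c₀) • ((ν₀.restrict D).prod (volume.restrict (Ioo b₁ b₂)))
    with hσdef
  haveI : IsFiniteMeasure σm := by
    constructor
    rw [hσdef, Measure.smul_apply, smul_eq_mul]
    exact ENNReal.mul_lt_top ENNReal.ofReal_lt_top (measure_lt_top _ _)
  -- rectangle comparison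
  have hrect : ∀ D₁ D₂ : Set ℝ, MeasurableSet D₁ → MeasurableSet D₂ →
      σm (D₁ ×ˢ D₂) ≤ ρ (D₁ ×ˢ D₂) := by
    intro D₁ D₂ h₁ h₂
    have hσval : σm (D₁ ×ˢ D₂)
        = ENNReal.ofReal c₀ * (ν₀ (D₁ ∩ D) * volume (D₂ ∩ Ioo b₁ b₂)) := by
      rw [hσdef, Measure.smul_apply, smul_eq_mul, Measure.prod_prod,
        Measure.restrict_apply h₁, Measure.restrict_apply h₂]
    have hρval : ρ (D₁ ×ˢ D₂) = μ {ω | (A ω, B ω) ∈ D₁ ×ˢ D₂} := by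
      rw [hρdef, Measure.map_apply hABm (h₁.prod h₂)]; rfl
    have hle := hminor (D₁ ∩ D) D₂ (h₁.inter hDm) h₂
    have hDI : (D₁ ∩ D) ∩ I₁ = D₁ ∩ D :=
      inter_eq_left.mpr fun x hx => hDsub hx.2
    rw [hDI] at hle
    have hmono : (μ {ω | (A ω, B ω) ∈ (D₁ ∩ D) ×ˢ D₂}).toReal
        ≤ (μ {ω | (A ω, B ω) ∈ D₁ ×ˢ D₂}).toReal :=
      ENNReal.toReal_mono (measure_ne_top μ _)
        (measure_mono fun ω hω => ⟨hω.1.1, hω.2⟩)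
    rw [hσval, hρval]
    have hne : ENNReal.ofReal c₀ * (ν₀ (D₁ ∩ D) * volume (D₂ ∩ Ioo b₁ b₂)) ≠ ∞ := by
      apply ENNReal.mul_ne_top ENNReal.ofReal_ne_top
      apply ENNReal.mul_ne_top
      · exact (lt_of_le_of_lt (measure_mono inter_subset_right) hDfin).ne
      · exact (lt_of_le_of_lt (measure_mono inter_subset_right) measure_Ioo_lt_top).ne
    rw [← ENNReal.toReal_le_toReal hne (measure_ne_top μ _)]
    rw [ENNReal.toReal_mul, ENNReal.toReal_mul, ENNReal.toReal_ofReal hc₀.le, ← mul_assoc]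
    exact le_trans hle hmono
  -- closed ball comparison, hence comparison on all measurable sets
  have hball : ∀ z r, σm (closedBall z r) ≤ ρ (closedBall z r) := by
    rintro ⟨z₁, z₂⟩ r
    rw [← closedBall_prod_same]
    exact hrect _ _ measurableSet_closedBall measurableSet_closedBall
  have hσρ := le_on_measurable_of_closedBall_le hball
  refine ⟨ε, hε0, hεlt, θ, hθ0, ?_⟩
  intro x hx E hE
  have hxε : |x| < ε := by simpa [Real.dist_eq] using hx
  set E₀ := Ioo (b₁ + ε * M) (b₂ - ε * M) with hE₀def
  set S := (fun p : ℝ × ℝ => p.1 * x + p.2) ⁻¹' E with hSdef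
  have hSm : MeasurableSet S := ((measurable_fst.mul_const x).add measurable_snd) hE
  have hμS : ρ S = μ {ω | A ω * x + B ω ∈ E} := by
    rw [hρdef, Measure.map_apply hABm hSm]; rfl
  -- lower bound for σm S
  have hbound : ∀ a ∈ D, volume (E ∩ E₀)
      ≤ (volume.restrict (Ioo b₁ b₂)) (Prod.mk a ⁻¹' S) := by
    intro a ha
    have haM : |a| ≤ M := by
      obtain ⟨h1, h2⟩ := hDsub ha
      rw [abs_le]
      constructor
      · have := neg_abs_le (a₀ - δ)
        have := le_max_left |a₀ - δ| |a₀ + δ|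
        rw [← hMdef] at this
        linarith
      · linarith
    have hax : |a * x| < ε * M := by
      rw [abs_mul]
      calc |a| * |x| ≤ M * |x| := mul_le_mul_of_nonneg_right haM (abs_nonneg x)
        _ < M * ε := mul_lt_mul_of_pos_left hxε hM0
        _ = ε * M := mul_comm _ _
    have hpre : Prod.mk a ⁻¹' S = (fun b => a * x + b) ⁻¹' E := rfl
    rw [hpre, Measure.restrict_apply ((measurable_const_add (a * x)) hE)]
    have hsub : (fun b => a * x + b) ⁻¹' (E ∩ E₀)
        ⊆ ((fun b => a * x + b) ⁻¹' E) ∩ Ioo b₁ b₂ := by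
      rintro b ⟨hbE, hb1, hb2⟩
      obtain ⟨hax1, hax2⟩ := abs_lt.1 hax
      have hb1' : b₁ + ε * M < a * x + b := hb1
      have hb2' : a * x + b < b₂ - ε * M := hb2
      exact ⟨hbE, by constructor <;> [linarith; linarith]⟩
    calc volume (E ∩ E₀) = volume ((fun b => a * x + b) ⁻¹' (E ∩ E₀)) :=
          (measure_preimage_add volume (a * x) (E ∩ E₀)).symm
      _ ≤ _ := measure_mono hsub
  have hlow : ENNReal.ofReal c₀ * (ν₀ D * volume (E ∩ E₀)) ≤ σm S := by
    have hσS : σm S = ENNReal.ofReal c₀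
        * ∫⁻ a, (volume.restrict (Ioo b₁ b₂)) (Prod.mk a ⁻¹' S) ∂(ν₀.restrict D) := by
      rw [hσdef, Measure.smul_apply, smul_eq_mul, Measure.prod_apply hSm]
    rw [hσS]
    refine mul_le_mul_right ?_ _
    calc ν₀ D * volume (E ∩ E₀) = ∫⁻ _, volume (E ∩ E₀) ∂(ν₀.restrict D) := by
          rw [lintegral_const, Measure.restrict_apply_univ, mul_comm]
      _ ≤ _ := lintegral_mono_ae ((ae_restrict_iff' hDm).2 (ae_of_all _ hbound))
  have hENN : ENNReal.ofReal c₀ * (ν₀ D * volume (E ∩ E₀))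
      ≤ μ {ω | A ω * x + B ω ∈ E} :=
    hlow.trans (by rw [← hμS]; exact hσρ S hSm)
  have hfinal := ENNReal.toReal_mono (measure_ne_top μ _) hENN
  rw [ENNReal.toReal_mul, ENNReal.toReal_mul, ENNReal.toReal_ofReal hc₀.le,
    ← mul_assoc] at hfinal
  exact hfinal
end

section
/- Let {Δ_i}_{i≥1} be i.i.d. positive integer-valued random variables with finite mean E[Δ] and finite exponential moment E[t^{Δ}] < ∞ for some t > 1, let r_k = Δ_1 + ⋯ + Δ_k, and N(s) = sup{j ≥ 0 : r_j − 1 ≤ s}. Then for every δ > 0, P(sup_{t∈[0,1]} |N(nt)/n − t/E[Δ]| > δ) → 0 as n → ∞, and moreover the convergence is exponentially fast: there exist c > 0 and n_0 such that the probability is at most e^{-cn} for n ≥ n_0. -/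
open MeasureTheory ProbabilityTheory Filter Set

lemma aux_exp_upper (y : ℝ) (hy : 0 ≤ y) : Real.exp y ≤ 1 + y + y ^ 2 * Real.exp y := by
  rcases le_or_gt y 1 with h | h
  · have hb := Real.exp_bound (x := y) (by rwa [abs_of_nonneg hy]) (n := 2) (by norm_num)
    have h1 := (abs_sub_le_iff.mp hb).1
    rw [abs_of_nonneg hy] at h1
    norm_num [Finset.sum_range_succ] at h1
    nlinarith [Real.one_le_exp hy, sq_nonneg y]
  · nlinarith [mul_pos (show (0:ℝ) < y ^ 2 - 1 by nlinarith) (Real.exp_pos y)]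

lemma aux_exp_lower (y : ℝ) (hy : 0 ≤ y) : Real.exp (-y) ≤ 1 - y + y ^ 2 := by
  rcases le_or_gt y 1 with h | h
  · have hb := Real.exp_bound (x := -y) (by rwa [abs_neg, abs_of_nonneg hy]) (n := 2) (by norm_num)
    have h1 := (abs_sub_le_iff.mp hb).1
    rw [abs_neg, abs_of_nonneg hy] at h1
    norm_num [Finset.sum_range_succ] at h1
    nlinarith
  · have h2 : Real.exp (-y) ≤ 1 := by
      calc Real.exp (-y) ≤ Real.exp 0 := Real.exp_le_exp.mpr (by linarith)
        _ = 1 := Real.exp_zero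
    nlinarith

set_option maxHeartbeats 800000 in
lemma renewal_det (a : ℕ → ℝ) (ha0 : a 0 = 0) (hstep : ∀ k, a k + 1 ≤ a (k + 1))
    (m δ : ℝ) (hm : 1 ≤ m) (hδ : 0 < δ)
    (n : ℕ) (hn1 : 1 ≤ (n : ℝ)) (hn : 2 < δ * n)
    (K : ℕ) (hK : (1 / m + δ) * n ≤ K)
    (H : ∀ k ≤ K, |a k - k * m| ≤ δ / 2 * n)
    (u : ℝ) (hu0 : 0 ≤ u) (hu1 : u ≤ 1) :
    |((sSup {j : ℕ | a j - 1 ≤ (n : ℝ) * u} : ℕ) : ℝ) / n - u / m| ≤ δ := by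
  have hm0 : (0:ℝ) < m := lt_of_lt_of_le one_pos hm
  have hn0 : (0:ℝ) < n := lt_of_lt_of_le one_pos hn1
  have hmono : Monotone a := monotone_nat_of_le_succ fun k => by linarith [hstep k]
  have hgrow : ∀ j : ℕ, (j : ℝ) ≤ a j := by
    intro j
    induction j with
    | zero => simp [ha0]
    | succ j ih => push_cast; linarith [hstep j]
  set s : ℝ := (n : ℝ) * u with hs
  have hs0 : 0 ≤ s := mul_nonneg hn0.le hu0
  have hsn : s ≤ n := by
    calc s ≤ (n:ℝ) * 1 := by apply mul_le_mul_of_nonneg_left hu1 hn0.le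
    _ = n := mul_one _
  set A : Set ℕ := {j : ℕ | a j - 1 ≤ s} with hA
  have h0A : 0 ∈ A := by simp only [hA, mem_setOf_eq, ha0]; linarith
  have hbdd : BddAbove A := by
    refine BddAbove.mono ?_ (bddAbove_Iic (a := Nat.ceil (s + 1)))
    intro j hj
    simp only [hA, mem_setOf_eq] at hj
    have : (j : ℝ) ≤ s + 1 := le_trans (hgrow j) (by linarith)
    simpa using Nat.ceil_le_ceil this
  set ν : ℕ := sSup A with hν
  have hνA : ν ∈ A := Nat.sSup_mem ⟨0, h0A⟩ hbdd
  have hle : a ν ≤ s + 1 := by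
    have := hνA; simp only [hA, mem_setOf_eq] at this; linarith
  have hgt : s + 1 < a (ν + 1) := by
    by_contra hcon
    push_neg at hcon
    have hin : ν + 1 ∈ A := by simp only [hA, mem_setOf_eq]; linarith
    have := le_csSup hbdd hin
    omega
  have hνK : ν < K := by
    by_contra hcon
    push_neg at hcon
    have h1 : a K ≤ a ν := hmono hcon
    have h2 := (abs_le.mp (H K le_rfl)).1
    have hKm : (n : ℝ) + δ * n ≤ (K : ℝ) * m := by
      have hKge : (1 / m + δ) * (n : ℝ) * m ≤ (K : ℝ) * m :=
        mul_le_mul_of_nonneg_right hK hm0.le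
      have he : (1 / m + δ) * (n : ℝ) * m = n + δ * n * m := by field_simp
      nlinarith [mul_le_mul_of_nonneg_left hm (mul_nonneg hδ.le hn0.le)]
    linarith
  have HN := abs_le.mp (H ν hνK.le)
  have HN1 := abs_le.mp (H (ν + 1) hνK)
  push_cast at HN1
  have hrw : (ν : ℝ) / n - u / m = ((ν : ℝ) * m - u * n) / (n * m) := by
    field_simp
  rw [hrw, abs_div, abs_of_pos (mul_pos hn0 hm0), div_le_iff₀ (mul_pos hn0 hm0)]
  rw [abs_le]
  have hδn : (1:ℝ) < δ / 2 * n := by linarith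
  have h5 : δ / 2 * (n:ℝ) ≤ δ / 2 * n * m := le_mul_of_one_le_right (by linarith) hm
  have h6 : m < δ / 2 * (n:ℝ) * m := by
    calc m = 1 * m := (one_mul m).symm
    _ < δ / 2 * (n:ℝ) * m := by apply mul_lt_mul_of_pos_right hδn hm0
  constructor
  · have key : (n:ℝ) * u + 1 < ((ν:ℝ) + 1) * m + δ / 2 * n := by
      have h7 := HN1.2
      have h8 : s = (n:ℝ) * u := hs
      linarith [hgt]
    linarith [key, h5, h6]
  · have key : (ν : ℝ) * m ≤ (n:ℝ) * u + 1 + δ / 2 * n := by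
      have h7 := HN.1
      have h8 : s = (n:ℝ) * u := hs
      linarith [hle]
    linarith [key, h5, h6]

lemma sum_range_shift (f : ℕ → ℝ) (k : ℕ) :
    ∑ i ∈ Finset.range k, f (i + 1) = ∑ i ∈ Finset.Icc 1 k, f i := by
  induction k with
  | zero => simp
  | succ k ih =>
    have hins : Finset.Icc 1 (k + 1) = insert (k + 1) (Finset.Icc 1 k) := by
      ext x; simp [Finset.mem_Icc]; omega
    rw [Finset.sum_range_succ, ih, hins, Finset.sum_insert (by simp [Finset.mem_Icc])]
    ring

set_option maxHeartbeats 2000000 in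
/-- **Functional LLN with exponential rate for the renewal counting process** (used in the
proof of Lemma 5.1): for i.i.d. positive integer renewals `Δᵢ` with finite mean and a finite
exponential moment, with `r_k = Δ₁ + ⋯ + Δ_k` and `N(s) = sup{j : r_j − 1 ≤ s}`, for every
`δ > 0` the probability `P(sup_{t ∈ [0,1]} |N(nt)/n − t/EΔ| > δ)` tends to `0`, and in fact
is eventually bounded by `e^{−cn}` for some `c > 0`. -/
theorem renewal_counting_fLLN_exponential
    {Ω : Type*} [MeasurableSpace Ω] (μ : Measure Ω) [IsProbabilityMeasure μ]
    (Δ : ℕ → Ω → ℕ) (hmeas : ∀ i, Measurable (Δ i)) (hpos : ∀ i ω, 1 ≤ Δ i ω)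
    (hindep : iIndepFun Δ μ)
    (hident : ∀ i, 1 ≤ i → IdentDistrib (Δ i) (Δ 1) μ μ)
    (hmean : Integrable (fun ω => (Δ 1 ω : ℝ)) μ)
    (t : ℝ) (ht : 1 < t) (hexp : Integrable (fun ω => t ^ (Δ 1 ω)) μ)
    (r : ℕ → Ω → ℕ) (hr : ∀ k ω, r k ω = ∑ i ∈ Finset.range k, Δ (i + 1) ω)
    (N : ℝ → Ω → ℕ) (hN : ∀ s ω, N s ω = sSup {j : ℕ | (r j ω : ℝ) - 1 ≤ s})
    (δ : ℝ) (hδ : 0 < δ) :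
    Tendsto (fun n : ℕ =>
        (μ {ω | ∃ u ∈ Icc (0:ℝ) 1,
          δ < |(N (n * u) ω : ℝ) / n - u / ∫ ω', (Δ 1 ω' : ℝ) ∂μ|}).toReal)
      atTop (nhds 0) ∧
    ∃ c > (0:ℝ), ∃ n₀ : ℕ, ∀ n : ℕ, n₀ ≤ n →
      (μ {ω | ∃ u ∈ Icc (0:ℝ) 1,
          δ < |(N (n * u) ω : ℝ) / n - u / ∫ ω', (Δ 1 ω' : ℝ) ∂μ|}).toReal
        ≤ Real.exp (-c * n) := by
  classical
  set m : ℝ := ∫ ω', (Δ 1 ω' : ℝ) ∂μ with hm_def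
  set Y : ℕ → Ω → ℝ := fun i ω => (Δ i ω : ℝ) with hY
  have hYmeas : ∀ i, Measurable (Y i) := fun i => measurable_from_top.comp (hmeas i)
  have hgm : ∀ (g : ℕ → ℝ) (i : ℕ), Measurable (fun ω => g (Δ i ω)) :=
    fun g i => measurable_from_top.comp (hmeas i)
  have hYindep : iIndepFun Y μ :=
    hindep.comp (fun _ => ((↑) : ℕ → ℝ)) (fun _ => measurable_from_top)
  have hident' : ∀ i, 1 ≤ i → ∀ (g : ℕ → ℝ),
      (∫ ω, g (Δ i ω) ∂μ) = ∫ ω, g (Δ 1 ω) ∂μ := fun i hi g =>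
    ((hident i hi).comp (measurable_from_top (f := g))).integral_eq
  have hint_g : ∀ i, 1 ≤ i → ∀ (g : ℕ → ℝ), Integrable (fun ω => g (Δ 1 ω)) μ →
      Integrable (fun ω => g (Δ i ω)) μ := fun i hi g h =>
    ((hident i hi).comp (measurable_from_top (f := g))).integrable_iff.mpr h
  -- basic constants
  have hm1 : 1 ≤ m := by
    rw [hm_def]
    calc (1:ℝ) = ∫ _, (1:ℝ) ∂μ := by simp
    _ ≤ ∫ ω', (Δ 1 ω' : ℝ) ∂μ := by
        apply integral_mono (integrable_const 1) hmean
        intro ω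
        show (1:ℝ) ≤ ((Δ 1 ω : ℕ) : ℝ)
        exact_mod_cast hpos 1 ω
  have hm0 : (0:ℝ) < m := lt_of_lt_of_le one_pos hm1
  have ht0 : (0:ℝ) < t := lt_trans one_pos ht
  set lam : ℝ := Real.log t / 2 with hlam
  have hlam0 : 0 < lam := by
    have := Real.log_pos ht
    rw [hlam]; linarith
  have htexp : ∀ x : ℕ, (t:ℝ) ^ x = Real.exp (2 * lam * x) := by
    intro x
    have h1 : (2:ℝ) * lam * x = (x : ℝ) * Real.log t := by rw [hlam]; ring
    rw [h1, Real.exp_nat_mul, Real.exp_log ht0]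
  -- integrability of exponential moments
  have hti : ∀ i, 1 ≤ i → Integrable (fun ω => (t:ℝ) ^ Δ i ω) μ :=
    fun i hi => hint_g i hi (fun x => (t:ℝ) ^ x) hexp
  have hint_exp : ∀ (l : ℝ), l ≤ 2 * lam → ∀ i, 1 ≤ i →
      Integrable (fun ω => Real.exp (l * Y i ω)) μ := by
    intro l hl i hi
    refine (hti i hi).mono' ((hgm (fun x => Real.exp (l * x)) i).aestronglyMeasurable) ?_
    filter_upwards with ω
    rw [Real.norm_eq_abs, abs_of_pos (Real.exp_pos _), htexp]
    apply Real.exp_le_exp.mpr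
    have : (0:ℝ) ≤ (Δ i ω : ℝ) := Nat.cast_nonneg _
    calc l * Y i ω ≤ 2 * lam * Y i ω := by
          apply mul_le_mul_of_nonneg_right hl this
    _ = 2 * lam * (Δ i ω : ℝ) := rfl
  -- second moment with exponential weight
  have hx2 : ∀ x : ℝ, 0 ≤ x → x ^ 2 * Real.exp (lam * x) ≤ 4 / lam ^ 2 * Real.exp (2 * lam * x) := by
    intro x hx
    have h1 : lam * x / 2 ≤ Real.exp (lam * x / 2) := by
      linarith [Real.add_one_le_exp (lam * x / 2)]
    have h2 : (lam * x / 2) ^ 2 ≤ Real.exp (lam * x / 2) ^ 2 := by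
      apply pow_le_pow_left₀ (by positivity) h1
    have h3 : Real.exp (lam * x / 2) ^ 2 = Real.exp (lam * x) := by
      rw [sq, ← Real.exp_add]; ring_nf
    have h4 : (lam * x) ^ 2 / 4 ≤ Real.exp (lam * x) := by rw [← h3]; nlinarith [h2]
    have h5 : Real.exp (lam * x) * Real.exp (lam * x) = Real.exp (2 * lam * x) := by
      rw [← Real.exp_add]; ring_nf
    have hl2 : (0:ℝ) < lam ^ 2 := by positivity
    have key : lam ^ 2 * (x ^ 2 * Real.exp (lam * x)) ≤ 4 * Real.exp (2 * lam * x) := by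
      nlinarith [mul_le_mul_of_nonneg_right h4 (Real.exp_pos (lam * x)).le,
        Real.exp_pos (lam * x)]
    rw [show (4:ℝ) / lam ^ 2 * Real.exp (2 * lam * x)
        = (4 * Real.exp (2 * lam * x)) / lam ^ 2 by ring, le_div_iff₀ hl2]
    nlinarith [key]
  have hM2int : Integrable (fun ω => (Y 1 ω) ^ 2 * Real.exp (lam * Y 1 ω)) μ := by
    refine (hexp.const_mul (4 / lam ^ 2)).mono'
      ((hgm (fun x => (x:ℝ) ^ 2 * Real.exp (lam * x)) 1).aestronglyMeasurable) ?_
    filter_upwards with ω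
    rw [Real.norm_eq_abs, abs_of_nonneg (by positivity)]
    calc (Y 1 ω) ^ 2 * Real.exp (lam * Y 1 ω)
        ≤ 4 / lam ^ 2 * Real.exp (2 * lam * Y 1 ω) := hx2 _ (Nat.cast_nonneg _)
    _ = 4 / lam ^ 2 * t ^ Δ 1 ω := by rw [htexp]
  set M : ℝ := ∫ ω, (Y 1 ω) ^ 2 * Real.exp (lam * Y 1 ω) ∂μ with hM_def
  have hsqint : Integrable (fun ω => (Y 1 ω) ^ 2) μ := by
    refine hM2int.mono' ((hgm (fun x => (x:ℝ) ^ 2) 1).aestronglyMeasurable) ?_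
    filter_upwards with ω
    rw [Real.norm_eq_abs, abs_of_nonneg (by positivity)]
    nlinarith [Real.one_le_exp (show (0:ℝ) ≤ lam * Y 1 ω by positivity), sq_nonneg (Y 1 ω)]
  have hM1 : 1 ≤ M := by
    rw [hM_def]
    calc (1:ℝ) = ∫ _, (1:ℝ) ∂μ := by simp
    _ ≤ _ := by
        apply integral_mono (integrable_const 1) hM2int
        intro ω
        dsimp only
        have h1 : (1:ℝ) ≤ Y 1 ω := by
          show (1:ℝ) ≤ ((Δ 1 ω : ℕ) : ℝ)
          exact_mod_cast hpos 1 ω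
        nlinarith [Real.one_le_exp (show (0:ℝ) ≤ lam * Y 1 ω by positivity)]
  have hM0 : (0:ℝ) < M := lt_of_lt_of_le one_pos hM1
  have hsqle : (∫ ω, (Y 1 ω) ^ 2 ∂μ) ≤ M := by
    rw [hM_def]
    apply integral_mono hsqint hM2int
    intro ω
    dsimp only
    nlinarith [Real.one_le_exp (show (0:ℝ) ≤ lam * Y 1 ω by positivity), sq_nonneg (Y 1 ω)]
  -- mgf bounds
  have hmgf_plus : ∀ l : ℝ, 0 ≤ l → l ≤ lam → mgf (Y 1) μ l ≤ Real.exp (l * m + l ^ 2 * M) := by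
    intro l hl0 hll
    have hstep1 : mgf (Y 1) μ l ≤ 1 + l * m + l ^ 2 * M := by
      rw [mgf, hm_def, hM_def]
      have hint1 : Integrable (fun ω => Real.exp (l * Y 1 ω)) μ :=
        hint_exp l (by linarith) 1 le_rfl
      have hint2 : Integrable
          (fun ω => 1 + l * Y 1 ω + l ^ 2 * ((Y 1 ω) ^ 2 * Real.exp (lam * Y 1 ω))) μ :=
        ((integrable_const 1).add (hmean.const_mul l)).add (hM2int.const_mul (l ^ 2))
      calc (∫ ω, Real.exp (l * Y 1 ω) ∂μ)
          ≤ ∫ ω, (1 + l * Y 1 ω + l ^ 2 * ((Y 1 ω) ^ 2 * Real.exp (lam * Y 1 ω))) ∂μ := by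
            apply integral_mono hint1 hint2
            intro ω
            dsimp only
            have hx : (0:ℝ) ≤ Y 1 ω := Nat.cast_nonneg _
            have h1 := aux_exp_upper (l * Y 1 ω) (by positivity)
            have h2 : Real.exp (l * Y 1 ω) ≤ Real.exp (lam * Y 1 ω) :=
              Real.exp_le_exp.mpr (mul_le_mul_of_nonneg_right hll hx)
            have h3 : (l * Y 1 ω) ^ 2 * Real.exp (l * Y 1 ω)
                ≤ l ^ 2 * ((Y 1 ω) ^ 2 * Real.exp (lam * Y 1 ω)) := by
              rw [mul_pow]
              nlinarith [sq_nonneg (l * Y 1 ω), Real.exp_pos (l * Y 1 ω), sq_nonneg l,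
                sq_nonneg (Y 1 ω), mul_le_mul_of_nonneg_left h2
                  (show (0:ℝ) ≤ l ^ 2 * (Y 1 ω) ^ 2 by positivity)]
            calc Real.exp (l * Y 1 ω) ≤ 1 + l * Y 1 ω + (l * Y 1 ω) ^ 2 * Real.exp (l * Y 1 ω) := h1
            _ ≤ 1 + l * Y 1 ω + l ^ 2 * ((Y 1 ω) ^ 2 * Real.exp (lam * Y 1 ω)) := by linarith
      _ = 1 + l * (∫ ω, Y 1 ω ∂μ) + l ^ 2 * ∫ ω, (Y 1 ω) ^ 2 * Real.exp (lam * Y 1 ω) ∂μ := by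
            have hi1 : Integrable (fun ω => 1 + l * Y 1 ω) μ :=
              (integrable_const 1).add (hmean.const_mul l)
            have hi2 : Integrable
                (fun ω => l ^ 2 * ((Y 1 ω) ^ 2 * Real.exp (lam * Y 1 ω))) μ :=
              hM2int.const_mul (l ^ 2)
            rw [integral_add hi1 hi2,
              integral_add (integrable_const 1) (hmean.const_mul l),
              integral_const_mul, integral_const_mul]
            simp [hY]
    calc mgf (Y 1) μ l ≤ 1 + l * m + l ^ 2 * M := hstep1
    _ = (l * m + l ^ 2 * M) + 1 := by ring
    _ ≤ Real.exp (l * m + l ^ 2 * M) := Real.add_one_le_exp _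
  have hmgf_minus : ∀ l : ℝ, 0 ≤ l → mgf (Y 1) μ (-l) ≤ Real.exp (-(l * m) + l ^ 2 * M) := by
    intro l hl0
    have hstep1 : mgf (Y 1) μ (-l) ≤ 1 - l * m + l ^ 2 * M := by
      rw [mgf, hm_def, hM_def]
      have hint1 : Integrable (fun ω => Real.exp (-l * Y 1 ω)) μ :=
        hint_exp (-l) (by linarith) 1 le_rfl
      have hint2 : Integrable (fun ω => 1 - l * Y 1 ω + l ^ 2 * (Y 1 ω) ^ 2) μ :=
        ((integrable_const 1).sub (hmean.const_mul l)).add (hsqint.const_mul (l ^ 2))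
      calc (∫ ω, Real.exp (-l * Y 1 ω) ∂μ)
          ≤ ∫ ω, (1 - l * Y 1 ω + l ^ 2 * (Y 1 ω) ^ 2) ∂μ := by
            apply integral_mono hint1 hint2
            intro ω
            dsimp only
            have hx : (0:ℝ) ≤ Y 1 ω := Nat.cast_nonneg _
            have h1 := aux_exp_lower (l * Y 1 ω) (by positivity)
            have h2 : -l * Y 1 ω = -(l * Y 1 ω) := by ring
            rw [h2]
            calc Real.exp (-(l * Y 1 ω)) ≤ 1 - l * Y 1 ω + (l * Y 1 ω) ^ 2 := h1
            _ = 1 - l * Y 1 ω + l ^ 2 * (Y 1 ω) ^ 2 := by ring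
      _ = 1 - l * (∫ ω, Y 1 ω ∂μ) + l ^ 2 * ∫ ω, (Y 1 ω) ^ 2 ∂μ := by
            have hi1 : Integrable (fun ω => 1 - l * Y 1 ω) μ :=
              (integrable_const 1).sub (hmean.const_mul l)
            have hi2 : Integrable (fun ω => l ^ 2 * (Y 1 ω) ^ 2) μ :=
              hsqint.const_mul (l ^ 2)
            rw [integral_add hi1 hi2,
              integral_sub (integrable_const 1) (hmean.const_mul l),
              integral_const_mul, integral_const_mul]
            simp [hY]
      _ ≤ 1 - l * (∫ ω, Y 1 ω ∂μ) + l ^ 2 * M := by nlinarith [sq_nonneg l, hsqle]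
    calc mgf (Y 1) μ (-l) ≤ 1 - l * m + l ^ 2 * M := hstep1
    _ = (-(l * m) + l ^ 2 * M) + 1 := by ring
    _ ≤ Real.exp (-(l * m) + l ^ 2 * M) := Real.add_one_le_exp _
  -- sum identity
  have hIcc : ∀ (k : ℕ) (ω : Ω), (r k ω : ℝ) = (∑ i ∈ Finset.Icc 1 k, Y i) ω := by
    intro k ω
    rw [hr, Finset.sum_apply]
    push_cast
    exact sum_range_shift (fun i => (Δ i ω : ℝ)) k
  have hmgf_eq : ∀ i, 1 ≤ i → ∀ l : ℝ, mgf (Y i) μ l = mgf (Y 1) μ l := by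
    intro i hi l
    rw [mgf, mgf]
    exact hident' i hi (fun x => Real.exp (l * x))
  have hmgfS : ∀ (k : ℕ) (l : ℝ), mgf (∑ i ∈ Finset.Icc 1 k, Y i) μ l = mgf (Y 1) μ l ^ k := by
    intro k l
    rw [hYindep.mgf_sum hYmeas]
    rw [Finset.prod_congr rfl (fun i hi => hmgf_eq i (Finset.mem_Icc.mp hi).1 l),
      Finset.prod_const, Nat.card_Icc]
    simp
  -- Chernoff bound
  have hcher : ∀ (k : ℕ) (a l : ℝ), 0 < l → l ≤ lam →
      (μ {ω | a < |(r k ω : ℝ) - k * m|}).toReal ≤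
        2 * Real.exp (-(l * a) + l ^ 2 * M * k) := by
    intro k a l hl hll
    have hintS : Integrable (fun ω => Real.exp (l * (∑ i ∈ Finset.Icc 1 k, Y i) ω)) μ :=
      hYindep.integrable_exp_mul_sum hYmeas
        (fun i hi => hint_exp l (by linarith) i (Finset.mem_Icc.mp hi).1)
    have hintS' : Integrable (fun ω => Real.exp (-l * (∑ i ∈ Finset.Icc 1 k, Y i) ω)) μ :=
      hYindep.integrable_exp_mul_sum hYmeas
        (fun i hi => hint_exp (-l) (by linarith) i (Finset.mem_Icc.mp hi).1)
    have hup := measure_ge_le_exp_mul_mgf (μ := μ) (X := ∑ i ∈ Finset.Icc 1 k, Y i)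
      ((k:ℝ) * m + a) hl.le hintS
    have hlo := measure_le_le_exp_mul_mgf (μ := μ) (X := ∑ i ∈ Finset.Icc 1 k, Y i)
      ((k:ℝ) * m - a) (neg_nonpos.mpr hl.le) hintS'
    have hup2 : (μ {ω | (k:ℝ) * m + a ≤ (∑ i ∈ Finset.Icc 1 k, Y i) ω}).toReal ≤
        Real.exp (-(l * a) + l ^ 2 * M * k) := by
      refine hup.trans ?_
      rw [hmgfS k l]
      calc Real.exp (-l * ((k:ℝ) * m + a)) * mgf (Y 1) μ l ^ k
          ≤ Real.exp (-l * ((k:ℝ) * m + a)) * (Real.exp (l * m + l ^ 2 * M)) ^ k := by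
            apply mul_le_mul_of_nonneg_left
              (pow_le_pow_left₀ mgf_nonneg (hmgf_plus l hl.le hll) k) (Real.exp_pos _).le
      _ = Real.exp (-l * ((k:ℝ) * m + a) + (k:ℝ) * (l * m + l ^ 2 * M)) := by
            rw [← Real.exp_nat_mul, ← Real.exp_add]
      _ ≤ Real.exp (-(l * a) + l ^ 2 * M * k) := by
            apply Real.exp_le_exp.mpr; apply le_of_eq; ring
    have hlo2 : (μ {ω | (∑ i ∈ Finset.Icc 1 k, Y i) ω ≤ (k:ℝ) * m - a}).toReal ≤
        Real.exp (-(l * a) + l ^ 2 * M * k) := by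
      refine hlo.trans ?_
      rw [hmgfS k (-l)]
      calc Real.exp (- -l * ((k:ℝ) * m - a)) * mgf (Y 1) μ (-l) ^ k
          ≤ Real.exp (- -l * ((k:ℝ) * m - a)) * (Real.exp (-(l * m) + l ^ 2 * M)) ^ k := by
            apply mul_le_mul_of_nonneg_left
              (pow_le_pow_left₀ mgf_nonneg (hmgf_minus l hl.le) k) (Real.exp_pos _).le
      _ = Real.exp (- -l * ((k:ℝ) * m - a) + (k:ℝ) * (-(l * m) + l ^ 2 * M)) := by
            rw [← Real.exp_nat_mul, ← Real.exp_add]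
      _ ≤ Real.exp (-(l * a) + l ^ 2 * M * k) := by
            apply Real.exp_le_exp.mpr; apply le_of_eq; ring
    have hsub : {ω | a < |(r k ω : ℝ) - k * m|} ⊆
        {ω | (k:ℝ) * m + a ≤ (∑ i ∈ Finset.Icc 1 k, Y i) ω} ∪
        {ω | (∑ i ∈ Finset.Icc 1 k, Y i) ω ≤ (k:ℝ) * m - a} := by
      intro ω hω
      simp only [mem_setOf_eq] at hω
      rw [hIcc k ω] at hω
      rcases lt_abs.mp hω with h | h
      · left; simp only [mem_setOf_eq]; linarith
      · right; simp only [mem_setOf_eq]; linarith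
    have hμ : μ {ω | a < |(r k ω : ℝ) - k * m|} ≤
        μ {ω | (k:ℝ) * m + a ≤ (∑ i ∈ Finset.Icc 1 k, Y i) ω} +
        μ {ω | (∑ i ∈ Finset.Icc 1 k, Y i) ω ≤ (k:ℝ) * m - a} :=
      (measure_mono hsub).trans (measure_union_le _ _)
    have hne : μ {ω | (k:ℝ) * m + a ≤ (∑ i ∈ Finset.Icc 1 k, Y i) ω} +
        μ {ω | (∑ i ∈ Finset.Icc 1 k, Y i) ω ≤ (k:ℝ) * m - a} ≠ ⊤ :=
      ENNReal.add_ne_top.mpr ⟨measure_ne_top μ _, measure_ne_top μ _⟩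
    have h2 := ENNReal.toReal_mono hne hμ
    rw [ENNReal.toReal_add (measure_ne_top μ _) (measure_ne_top μ _)] at h2
    linarith [hup2, hlo2]
  -- choose l, β, C
  set l : ℝ := min lam (δ / (8 * M * (2 + δ))) with hl_def
  have hl0 : 0 < l := lt_min hlam0 (by positivity)
  have hllam : l ≤ lam := min_le_left _ _
  set β : ℝ := l * δ / 8 with hβ_def
  have hβ0 : 0 < β := by rw [hβ_def]; positivity
  set C : ℝ := 2 * (3 + δ) / β with hC_def
  have hlM : l * M * (2 + δ) ≤ δ / 8 := by
    have h1 : l ≤ δ / (8 * M * (2 + δ)) := min_le_right _ _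
    have h2 : (0:ℝ) < 8 * M * (2 + δ) := by positivity
    have hM' : M ≠ 0 := ne_of_gt hM0
    have h2δ : (2 + δ) ≠ 0 := by positivity
    calc l * M * (2 + δ) = l * (M * (2 + δ)) := by ring
    _ ≤ δ / (8 * M * (2 + δ)) * (M * (2 + δ)) :=
          mul_le_mul_of_nonneg_right h1 (by positivity)
    _ = δ / 8 := by field_simp
  -- main estimate
  have main : ∀ n : ℕ, 1 ≤ (n:ℝ) → 2 < δ * n → C ≤ Real.exp (β * n) →
      (μ {ω | ∃ u ∈ Icc (0:ℝ) 1,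
          δ < |(N (n * u) ω : ℝ) / n - u / m|}).toReal ≤ Real.exp (-β * n) := by
    intro n hn1 hn2 hnC
    have hn0 : (0:ℝ) < n := lt_of_lt_of_le one_pos hn1
    set K : ℕ := Nat.ceil ((1 / m + δ) * n) with hK_def
    -- inclusion
    have hinc : {ω | ∃ u ∈ Icc (0:ℝ) 1, δ < |(N (n * u) ω : ℝ) / n - u / m|} ⊆
        ⋃ k ∈ Finset.range (K + 1), {ω | δ / 2 * n < |(r k ω : ℝ) - k * m|} := by
      intro ω hω
      simp only [mem_setOf_eq] at hω
      obtain ⟨u, hu, hgtu⟩ := hω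
      by_contra hcon
      simp only [mem_iUnion, mem_setOf_eq, not_exists] at hcon
      have H : ∀ k ≤ K, |(r k ω : ℝ) - k * m| ≤ δ / 2 * n := by
        intro k hk
        exact not_lt.mp (hcon k (Finset.mem_range.mpr (Nat.lt_succ_of_le hk)))
      have ha0 : ((r 0 ω : ℕ) : ℝ) = 0 := by simp [hr]
      have hstep : ∀ k : ℕ, ((r k ω : ℕ) : ℝ) + 1 ≤ ((r (k + 1) ω : ℕ) : ℝ) := by
        intro k
        have hrk : r (k + 1) ω = r k ω + Δ (k + 1) ω := by
          rw [hr, hr, Finset.sum_range_succ]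
        rw [hrk]
        push_cast
        have := hpos (k + 1) ω
        have h1 : (1:ℝ) ≤ (Δ (k + 1) ω : ℝ) := by exact_mod_cast this
        linarith
      have hdet := renewal_det (fun k => ((r k ω : ℕ) : ℝ)) ha0 hstep m δ hm1 hδ n hn1 hn2
        K (Nat.le_ceil _) H u hu.1 hu.2
      rw [hN] at hgtu
      exact absurd hdet (not_le.mpr hgtu)
    have h1 : μ {ω | ∃ u ∈ Icc (0:ℝ) 1, δ < |(N (n * u) ω : ℝ) / n - u / m|} ≤
        ∑ k ∈ Finset.range (K + 1), μ {ω | δ / 2 * n < |(r k ω : ℝ) - k * m|} :=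
      (measure_mono hinc).trans (measure_biUnion_finset_le _ _)
    have h2 : (μ {ω | ∃ u ∈ Icc (0:ℝ) 1, δ < |(N (n * u) ω : ℝ) / n - u / m|}).toReal ≤
        ∑ k ∈ Finset.range (K + 1), (μ {ω | δ / 2 * n < |(r k ω : ℝ) - k * m|}).toReal := by
      rw [← ENNReal.toReal_sum (fun k _ => measure_ne_top μ _)]
      exact ENNReal.toReal_mono
        (ENNReal.sum_lt_top.mpr (fun k _ => (measure_ne_top μ _).lt_top)).ne h1
    have hKball : (K : ℝ) ≤ (2 + δ) * n := by
      have h3 : (K : ℝ) < (1 / m + δ) * n + 1 := Nat.ceil_lt_add_one (by positivity)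
      have h4 : 1 / m ≤ 1 := by
        rw [div_le_one hm0]; exact hm1
      nlinarith [hδ.le, hn1]
    have h3 : ∀ k ∈ Finset.range (K + 1),
        (μ {ω | δ / 2 * n < |(r k ω : ℝ) - k * m|}).toReal ≤
          2 * Real.exp (-(3 * β) * n) := by
      intro k hk
      refine (hcher k (δ / 2 * n) l hl0 hllam).trans ?_
      have hkK : (k : ℝ) ≤ (K : ℝ) := by
        exact_mod_cast Nat.lt_succ_iff.mp (Finset.mem_range.mp hk)
      have hvar : l ^ 2 * M * k ≤ β * n := by
        have h5 : l ^ 2 * M * k ≤ l ^ 2 * M * ((2 + δ) * n) := by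
          apply mul_le_mul_of_nonneg_left (hkK.trans hKball) (by positivity)
        calc l ^ 2 * M * k ≤ l ^ 2 * M * ((2 + δ) * n) := h5
        _ = l * (l * M * (2 + δ)) * n := by ring
        _ ≤ l * (δ / 8) * n := by
              apply mul_le_mul_of_nonneg_right (mul_le_mul_of_nonneg_left hlM hl0.le) hn0.le
        _ = β * n := by rw [hβ_def]; ring
      have hdev : -(l * (δ / 2 * n)) + l ^ 2 * M * k ≤ -(3 * β) * n := by
        have h6 : l * (δ / 2 * n) = 4 * β * n := by rw [hβ_def]; ring
        linarith
      have := Real.exp_le_exp.mpr hdev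
      linarith
    have h4 : (μ {ω | ∃ u ∈ Icc (0:ℝ) 1, δ < |(N (n * u) ω : ℝ) / n - u / m|}).toReal ≤
        ((K : ℝ) + 1) * (2 * Real.exp (-(3 * β) * n)) := by
      refine h2.trans ?_
      calc ∑ k ∈ Finset.range (K + 1), (μ {ω | δ / 2 * n < |(r k ω : ℝ) - k * m|}).toReal
          ≤ ∑ _k ∈ Finset.range (K + 1), 2 * Real.exp (-(3 * β) * n) := Finset.sum_le_sum h3
      _ = ((K : ℝ) + 1) * (2 * Real.exp (-(3 * β) * n)) := by
            rw [Finset.sum_const, Finset.card_range]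
            push_cast
            ring
    have hKn : (K : ℝ) + 1 ≤ (3 + δ) * n := by
      nlinarith [hKball, hn1]
    have hnexp : (n : ℝ) * β ≤ Real.exp (β * n) := by
      have := Real.add_one_le_exp (β * n)
      nlinarith [hβ0, hn0]
    calc (μ {ω | ∃ u ∈ Icc (0:ℝ) 1, δ < |(N (n * u) ω : ℝ) / n - u / m|}).toReal
        ≤ ((K : ℝ) + 1) * (2 * Real.exp (-(3 * β) * n)) := h4
    _ ≤ (3 + δ) * n * (2 * Real.exp (-(3 * β) * n)) := by
          apply mul_le_mul_of_nonneg_right hKn (by positivity)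
    _ = (2 * (3 + δ) / β) * ((n:ℝ) * β) * Real.exp (-(3 * β) * n) := by
          field_simp
    _ ≤ (2 * (3 + δ) / β) * Real.exp (β * n) * Real.exp (-(3 * β) * n) := by
          apply mul_le_mul_of_nonneg_right
            (mul_le_mul_of_nonneg_left hnexp (by positivity)) (Real.exp_pos _).le
    _ = C * Real.exp (β * n + -(3 * β) * n) := by
          rw [hC_def, Real.exp_add]; ring
    _ ≤ Real.exp (β * n) * Real.exp (β * n + -(3 * β) * n) := by
          apply mul_le_mul_of_nonneg_right hnC (Real.exp_pos _).le
    _ = Real.exp (β * n + (β * n + -(3 * β) * n)) := by rw [← Real.exp_add]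
    _ ≤ Real.exp (-β * n) := by
          apply Real.exp_le_exp.mpr; apply le_of_eq; ring
  -- collect eventual conditions
  have hev1 : ∀ᶠ n : ℕ in atTop, 1 ≤ (n : ℝ) := by
    filter_upwards [eventually_ge_atTop 1] with n hn
    exact_mod_cast hn
  have hev2 : ∀ᶠ n : ℕ in atTop, 2 < δ * n := by
    have htend : Tendsto (fun n : ℕ => δ * (n : ℝ)) atTop atTop :=
      (tendsto_natCast_atTop_atTop (R := ℝ)).const_mul_atTop hδ
    exact htend.eventually_gt_atTop 2
  have hev3 : ∀ᶠ n : ℕ in atTop, C ≤ Real.exp (β * n) := by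
    have htend : Tendsto (fun n : ℕ => Real.exp (β * (n : ℝ))) atTop atTop :=
      Real.tendsto_exp_atTop.comp ((tendsto_natCast_atTop_atTop (R := ℝ)).const_mul_atTop hβ0)
    exact htend.eventually_ge_atTop C
  have hev : ∀ᶠ n : ℕ in atTop,
      (μ {ω | ∃ u ∈ Icc (0:ℝ) 1,
          δ < |(N (n * u) ω : ℝ) / n - u / m|}).toReal ≤ Real.exp (-β * n) := by
    filter_upwards [hev1, hev2, hev3] with n h1 h2 h3
    exact main n h1 h2 h3
  obtain ⟨n₀, hn₀⟩ := eventually_atTop.mp hev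
  constructor
  · -- Part 1: tendsto
    have hexp0 : Tendsto (fun n : ℕ => Real.exp (-β * n)) atTop (nhds 0) := by
      have h := tendsto_pow_atTop_nhds_zero_of_lt_one (Real.exp_nonneg (-β))
        (Real.exp_lt_one_iff.mpr (by linarith))
      convert h using 1
      funext n
      rw [← Real.exp_nat_mul]
      congr 1
      ring
    apply tendsto_of_tendsto_of_tendsto_of_le_of_le' tendsto_const_nhds hexp0
    · filter_upwards with n
      exact ENNReal.toReal_nonneg
    · exact hev
  · exact ⟨β, hβ0, n₀, hn₀⟩
end

section
/- Define m, π_1 : D[0,1] → ℝ by m(ξ) = inf_{t∈[0,1]} ξ(t) and π_1(ξ) = ξ(1). For real numbers a_+ > max{μ, 0} and a_- > max{−μ, 0}, the set E = {ξ ∈ D[0,1] : ξ(1) ≥ a_+, inf_{t∈[0,1]} ξ(t) ≤ −a_-} = m^{-1}(−∞, −a_-] ∩ π_1^{-1}[a_+, ∞) is closed in D[0,1] equipped with the M_1' topology, and E is bounded away (in the d_{M_1'} metric) from the set D̲^μ_{≪2} of functions of the form μt + x·1_{[y,1]}(t) with x ∈ ℝ and y ∈ [0,1], together with the function μt; i.e.,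 there exists r > 0 such that d_{M_1'}(ξ₁, ξ₂) ≥ r for all ξ₁ ∈ E and ξ₂ ∈ D̲^μ_{≪2}. -/
open Set Filter Topology

noncomputable section

/-- `ξ(t⁻)` with the convention `ξ(0⁻) = 0`. -/
def leftVal (ξ : ℝ → ℝ) (t : ℝ) : ℝ := if t = 0 then 0 else Function.leftLim ξ t

/-- A càdlàg function on `[0,1]`: right-continuous on `[0,1)` with left limits on `(0,1]`. -/
def IsCadlag (ξ : ℝ → ℝ) : Prop :=
  (∀ t ∈ Ico (0:ℝ) 1, Tendsto ξ (nhdsWithin t (Ioi t)) (nhds (ξ t))) ∧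
  (∀ t ∈ Ioc (0:ℝ) 1, ∃ l : ℝ, Tendsto ξ (nhdsWithin t (Iio t)) (nhds l))

/-- The extended completed graph `Γ'_ξ` of `ξ` (with `ξ(0⁻) = 0`). -/
def extGraph (ξ : ℝ → ℝ) : Set (ℝ × ℝ) :=
  {p | p.2 ∈ Icc (0:ℝ) 1 ∧
    p.1 ∈ Icc (min (leftVal ξ p.2) (ξ p.2)) (max (leftVal ξ p.2) (ξ p.2))}

/-- `(u, v)` is a parametric representation of `ξ`: a continuous map of `[0,1]` onto `Γ'_ξ`
which is nondecreasing for the order on the graph. -/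
def ParamRep (ξ u v : ℝ → ℝ) : Prop :=
  ContinuousOn u (Icc 0 1) ∧ ContinuousOn v (Icc 0 1) ∧
  (fun s => (u s, v s)) '' Icc (0:ℝ) 1 = extGraph ξ ∧
  ∀ s₁ ∈ Icc (0:ℝ) 1, ∀ s₂ ∈ Icc (0:ℝ) 1, s₁ ≤ s₂ →
    v s₁ < v s₂ ∨ (v s₁ = v s₂ ∧ |leftVal ξ (v s₁) - u s₁| ≤ |leftVal ξ (v s₂) - u s₂|)

/-- The `M₁'` metric on `D[0,1]`. -/
def dM1 (ξ ζ : ℝ → ℝ) : ℝ :=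
  sInf { r | ∃ u₁ v₁ u₂ v₂ : ℝ → ℝ, ParamRep ξ u₁ v₁ ∧ ParamRep ζ u₂ v₂ ∧
    r = max (⨆ s : Icc (0:ℝ) 1, |u₁ s - u₂ s|) (⨆ s : Icc (0:ℝ) 1, |v₁ s - v₂ s|) }

/-- The Skorokhod `J₁` metric on `D[0,1]`. -/
def dJ1 (ξ ζ : ℝ → ℝ) : ℝ :=
  sInf { r | ∃ lam : ℝ → ℝ, ContinuousOn lam (Icc 0 1) ∧ StrictMonoOn lam (Icc 0 1) ∧
    lam '' Icc (0:ℝ) 1 = Icc (0:ℝ) 1 ∧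
    r = max (⨆ s : Icc (0:ℝ) 1, |lam s - (s:ℝ)|) (⨆ s : Icc (0:ℝ) 1, |ξ (lam s) - ζ s|) }

/-- The set of discontinuities of `ξ` in `[0,1]` (with `ξ(0⁻) = 0`). -/
def Disc (ξ : ℝ → ℝ) : Set ℝ := {t ∈ Icc (0:ℝ) 1 | ξ t ≠ leftVal ξ t}

end

noncomputable section

open Set

/-- `ξ` is piecewise constant on `[0,1]`: there are `0 = t₀ < t₁ < ⋯ < t_m = 1` with `ξ`
constant on each `[t_{i-1}, t_i)`. -/
def PiecewiseConstant (ξ : ℝ → ℝ) : Prop :=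
  ∃ (m : ℕ) (t : ℕ → ℝ), 0 < m ∧ t 0 = 0 ∧ t m = 1 ∧ (∀ i < m, t i < t (i + 1)) ∧
    ∀ i < m, ∀ s₁ ∈ Ico (t i) (t (i + 1)), ∀ s₂ ∈ Ico (t i) (t (i + 1)), ξ s₁ = ξ s₂

/-- `D̲_{≤ j}`: nondecreasing piecewise constant functions with at most `j` discontinuities
(a nonzero value at `0` counts as a jump, via the convention `ξ(0⁻) = 0`). -/
def Dle (j : ℕ) : Set (ℝ → ℝ) :=
  {ξ | PiecewiseConstant ξ ∧ MonotoneOn ξ (Icc 0 1) ∧ 0 ≤ ξ 0 ∧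
    (Disc ξ).Finite ∧ (Disc ξ).ncard ≤ j}

/-- `D̲^z_{≤ j} = {z·id + ξ' : ξ' ∈ D̲_{≤ j}}`. -/
def DleZ (z : ℝ) (j : ℕ) : Set (ℝ → ℝ) :=
  {ξ | ∃ ξ' ∈ Dle j, ξ = fun t => z * t + ξ' t}

/-- `D̲_{≪ j}`: piecewise constant functions with strictly fewer than `j` discontinuities. -/
def Dll (j : ℕ) : Set (ℝ → ℝ) :=
  {ξ | PiecewiseConstant ξ ∧ (Disc ξ).Finite ∧ (Disc ξ).ncard < j}

/-- `D̲^z_{≪ j} = {z·id + ξ' : ξ' ∈ D̲_{≪ j}}`. -/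
def DllZ (z : ℝ) (j : ℕ) : Set (ℝ → ℝ) :=
  {ξ | ∃ ξ' ∈ Dll j, ξ = fun t => z * t + ξ' t}

end


noncomputable section
variable {ξ ζ u v : ℝ → ℝ}

lemma leftVal_zero (ξ : ℝ → ℝ) : leftVal ξ 0 = 0 := if_pos rfl
lemma leftVal_of_ne (ξ : ℝ → ℝ) {t : ℝ} (ht : t ≠ 0) : leftVal ξ t = Function.leftLim ξ t := if_neg ht

lemma self_mem_extGraph {t : ℝ} (ht : t ∈ Icc (0:ℝ) 1) : ((ξ t, t) : ℝ × ℝ) ∈ extGraph ξ :=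
  ⟨ht, min_le_right _ _, le_max_right _ _⟩

lemma ParamRep.mem_graph (h : ParamRep ξ u v) {s : ℝ} (hs : s ∈ Icc (0:ℝ) 1) :
    (u s, v s) ∈ extGraph ξ := by
  rw [← h.2.2.1]; exact ⟨s, hs, rfl⟩

lemma ParamRep.surj (h : ParamRep ξ u v) {p : ℝ × ℝ} (hp : p ∈ extGraph ξ) :
    ∃ s ∈ Icc (0:ℝ) 1, u s = p.1 ∧ v s = p.2 := by
  rw [← h.2.2.1] at hp
  obtain ⟨s, hs, hps⟩ := hp
  exact ⟨s, hs, congrArg Prod.fst hps, congrArg Prod.snd hps⟩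

lemma ParamRep.v_mono (h : ParamRep ξ u v) : MonotoneOn v (Icc 0 1) := by
  intro s₁ h₁ s₂ h₂ hle
  rcases h.2.2.2 s₁ h₁ s₂ h₂ hle with h' | h'
  · exact h'.le
  · exact h'.1.le

lemma ParamRep.v_one (h : ParamRep ξ u v) : v 1 = 1 := by
  obtain ⟨s, hs, _, hv⟩ := h.surj (self_mem_extGraph (ξ := ξ) ⟨zero_le_one, le_rfl⟩)
  have h1 : v s ≤ v 1 := h.v_mono hs ⟨zero_le_one, le_rfl⟩ hs.2
  have h2 : v 1 ≤ 1 := (h.mem_graph ⟨zero_le_one, le_rfl⟩).1.2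
  simp only at hv
  linarith [hv ▸ h1]

lemma ParamRep.u_one (h : ParamRep ξ u v) : u 1 = ξ 1 := by
  have h1 : (1:ℝ) ∈ Icc (0:ℝ) 1 := ⟨zero_le_one, le_rfl⟩
  have hmem := h.mem_graph h1
  rw [h.v_one] at hmem
  obtain ⟨s, hs, hu, hv⟩ := h.surj (self_mem_extGraph (ξ := ξ) h1)
  simp only at hu hv
  rcases h.2.2.2 s hs 1 h1 hs.2 with hlt | ⟨heq, hle⟩
  · rw [hv, h.v_one] at hlt; exact absurd hlt (lt_irrefl 1)
  · rw [hv, hu, h.v_one] at hle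
    obtain ⟨hlo, hhi⟩ := hmem.2
    rcases le_total (leftVal ξ 1) (ξ 1) with hc | hc
    · rw [min_eq_left hc] at hlo; rw [max_eq_right hc] at hhi
      rw [abs_of_nonpos (by linarith), abs_of_nonpos (by linarith)] at hle
      linarith
    · rw [min_eq_right hc] at hlo; rw [max_eq_left hc] at hhi
      rw [abs_of_nonneg (by linarith), abs_of_nonneg (by linarith)] at hle
      linarith

lemma abs_sub_le_ciSup {f g : ℝ → ℝ} (hf : ContinuousOn f (Icc 0 1))
    (hg : ContinuousOn g (Icc 0 1)) {s : ℝ} (hs : s ∈ Icc (0:ℝ) 1) :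
    |f s - g s| ≤ ⨆ x : Icc (0:ℝ) 1, |f x - g x| := by
  have hc : ContinuousOn (fun x => |f x - g x|) (Icc 0 1) := (hf.sub hg).abs
  have hb : BddAbove (Set.range fun x : Icc (0:ℝ) 1 => |f x.1 - g x.1|) := by
    obtain ⟨C, hC⟩ := isCompact_Icc.exists_bound_of_continuousOn hc
    refine ⟨C, ?_⟩
    rintro y ⟨x, rfl⟩
    simpa [Real.norm_eq_abs, abs_abs] using hC x x.2
  exact le_ciSup hb ⟨s, hs⟩

lemma cadlag_left_squeeze (hξ : IsCadlag ξ) {t₀ : ℝ} (ht₀ : t₀ ∈ Ioc (0:ℝ) 1)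
    {ε : ℝ} (hε : 0 < ε) :
    ∃ δ > 0, δ < t₀ ∧ ∀ r, t₀ - δ < r → r < t₀ →
      |ξ r - Function.leftLim ξ t₀| ≤ ε ∧ |leftVal ξ r - Function.leftLim ξ t₀| ≤ ε := by
  obtain ⟨l, hl⟩ := hξ.2 t₀ ht₀
  have hne : (𝓝[<] t₀) ≠ ⊥ := Filter.NeBot.ne inferInstance
  have hL : Function.leftLim ξ t₀ = l := leftLim_eq_of_tendsto hl
  have hev : ∀ᶠ x in 𝓝[<] t₀, ξ x ∈ Icc (l - ε) (l + ε) :=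
    hl (Icc_mem_nhds (by linarith) (by linarith))
  obtain ⟨a, ha, hsub⟩ := mem_nhdsLT_iff_exists_Ioo_subset.1 hev
  have ha' : a < t₀ := ha
  refine ⟨min ((t₀ - a)/2) (t₀/2), lt_min (by linarith) (by linarith [ht₀.1]), ?_, ?_⟩
  · calc min ((t₀ - a)/2) (t₀/2) ≤ t₀/2 := min_le_right _ _
      _ < t₀ := by linarith [ht₀.1]
  intro r hr1 hr2
  have hra : a < r := by
    have := min_le_left ((t₀ - a)/2) (t₀/2); linarith
  have hr0 : 0 < r := by
    have := min_le_right ((t₀ - a)/2) (t₀/2); linarith [ht₀.1]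
  have hrIcc : ξ r ∈ Icc (l - ε) (l + ε) := hsub ⟨hra, hr2⟩
  constructor
  · rw [hL, abs_le]; exact ⟨by linarith [hrIcc.1], by linarith [hrIcc.2]⟩
  · obtain ⟨lr, hlr⟩ := hξ.2 r ⟨hr0, le_of_lt (lt_of_lt_of_le hr2 ht₀.2)⟩
    have hner : (𝓝[<] r) ≠ ⊥ := Filter.NeBot.ne inferInstance
    have hvr : leftVal ξ r = lr := by
      rw [leftVal_of_ne ξ (ne_of_gt hr0)]; exact leftLim_eq_of_tendsto hlr
    have hevr : ∀ᶠ x in 𝓝[<] r, ξ x ∈ Icc (l - ε) (l + ε) := by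
      filter_upwards [Ioo_mem_nhdsLT_of_mem (⟨hra, le_of_lt hr2⟩ : r ∈ Ioc a t₀)] with x hx
      exact hsub hx
    have : lr ∈ Icc (l - ε) (l + ε) := isClosed_Icc.mem_of_tendsto hlr hevr
    rw [hL, hvr, abs_le]; exact ⟨by linarith [this.1], by linarith [this.2]⟩

lemma cadlag_right_squeeze (hξ : IsCadlag ξ) {t₀ : ℝ} (ht₀ : t₀ ∈ Ico (0:ℝ) 1)
    {ε : ℝ} (hε : 0 < ε) :
    ∃ δ > 0, ∀ r, t₀ < r → r < t₀ + δ → r ≤ 1 →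
      |ξ r - ξ t₀| ≤ ε ∧ |leftVal ξ r - ξ t₀| ≤ ε := by
  have hl := hξ.1 t₀ ht₀
  have hev : ∀ᶠ x in 𝓝[>] t₀, ξ x ∈ Icc (ξ t₀ - ε) (ξ t₀ + ε) :=
    hl (Icc_mem_nhds (by linarith) (by linarith))
  obtain ⟨b, hb, hsub⟩ := mem_nhdsGT_iff_exists_Ioo_subset.1 hev
  have hb' : t₀ < b := hb
  refine ⟨b - t₀, by linarith, ?_⟩
  intro r hr1 hr2 hr3
  have hrb : r < b := by linarith
  have hrIcc : ξ r ∈ Icc (ξ t₀ - ε) (ξ t₀ + ε) := hsub ⟨hr1, hrb⟩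
  constructor
  · rw [abs_le]; exact ⟨by linarith [hrIcc.1], by linarith [hrIcc.2]⟩
  · have hr0 : 0 < r := lt_of_le_of_lt ht₀.1 hr1
    obtain ⟨lr, hlr⟩ := hξ.2 r ⟨hr0, hr3⟩
    have hner : (𝓝[<] r) ≠ ⊥ := Filter.NeBot.ne inferInstance
    have hvr : leftVal ξ r = lr := by
      rw [leftVal_of_ne ξ (ne_of_gt hr0)]; exact leftLim_eq_of_tendsto hlr
    have hevr : ∀ᶠ x in 𝓝[<] r, ξ x ∈ Icc (ξ t₀ - ε) (ξ t₀ + ε) := by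
      filter_upwards [Ioo_mem_nhdsLT_of_mem (⟨hr1, le_of_lt hrb⟩ : r ∈ Ioc t₀ b)] with x hx
      exact hsub hx
    have : lr ∈ Icc (ξ t₀ - ε) (ξ t₀ + ε) := isClosed_Icc.mem_of_tendsto hlr hevr
    rw [hvr, abs_le]; exact ⟨by linarith [this.1], by linarith [this.2]⟩

end


noncomputable section
variable {ξ : ℝ → ℝ}

lemma disc_finite_of_big  (hξ : IsCadlag ξ) {ε : ℝ} (hε : 0 < ε) :
    {t ∈ Icc (0:ℝ) 1 | ε ≤ |ξ t - leftVal ξ t|}.Finite := by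
  set D := {t ∈ Icc (0:ℝ) 1 | ε ≤ |ξ t - leftVal ξ t|} with hD
  have key : ∀ t₀ : ℝ, ∃ δ > 0, ∀ t ∈ D, |t - t₀| < δ → t = t₀ := by
    intro t₀
    by_cases hlo : t₀ < 0
    · exact ⟨-t₀, by linarith, fun t ht habs => by have := (abs_lt.1 habs).2; exfalso; linarith [ht.1.1]⟩
    by_cases hhi : 1 < t₀
    · exact ⟨t₀ - 1, by linarith, fun t ht habs => by have := (abs_lt.1 habs).1; exfalso; linarith [ht.1.2]⟩
    push_neg at hlo hhi
    -- left δ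
    obtain ⟨δ₁, hδ₁pos, hδ₁⟩ : ∃ δ > 0, ∀ t ∈ D, t₀ - δ < t → t < t₀ → False := by
      by_cases h0 : 0 < t₀
      · obtain ⟨δ, hδpos, _, hδ⟩ := cadlag_left_squeeze hξ ⟨h0, hhi⟩ (show 0 < ε/3 by linarith)
        refine ⟨δ, hδpos, fun t ht h1 h2 => ?_⟩
        obtain ⟨ha, hb⟩ := hδ t h1 h2
        have : |ξ t - leftVal ξ t| ≤ 2*ε/3 := by
          calc |ξ t - leftVal ξ t| ≤ |ξ t - Function.leftLim ξ t₀| + |leftVal ξ t - Function.leftLim ξ t₀| := by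
                rw [abs_sub_comm (leftVal ξ t)]; exact abs_sub_le _ _ _
            _ ≤ 2*ε/3 := by linarith
        linarith [ht.2]
      · push_neg at h0
        exact ⟨1, one_pos, fun t ht h1 h2 => by linarith [ht.1.1, h0]⟩
    -- right δ
    obtain ⟨δ₂, hδ₂pos, hδ₂⟩ : ∃ δ > 0, ∀ t ∈ D, t₀ < t → t < t₀ + δ → False := by
      by_cases h1 : t₀ < 1
      · obtain ⟨δ, hδpos, hδ⟩ := cadlag_right_squeeze hξ ⟨hlo, h1⟩ (show 0 < ε/3 by linarith)
        refine ⟨δ, hδpos, fun t ht ha hb => ?_⟩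
        obtain ⟨hc, hd⟩ := hδ t ha hb ht.1.2
        have : |ξ t - leftVal ξ t| ≤ 2*ε/3 := by
          calc |ξ t - leftVal ξ t| ≤ |ξ t - ξ t₀| + |leftVal ξ t - ξ t₀| := by
                rw [abs_sub_comm (leftVal ξ t)]; exact abs_sub_le _ _ _
            _ ≤ 2*ε/3 := by linarith
        linarith [ht.2]
      · push_neg at h1
        exact ⟨1, one_pos, fun t ht ha hb => by linarith [ht.1.2, h1]⟩
    refine ⟨min δ₁ δ₂, lt_min hδ₁pos hδ₂pos, fun t ht habs => ?_⟩
    rcases lt_trichotomy t t₀ with h | h | h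
    · exact absurd (hδ₁ t ht (by cases abs_lt.1 habs; linarith [min_le_left δ₁ δ₂]) h) not_false
    · exact h
    · exact absurd (hδ₂ t ht h (by cases abs_lt.1 habs; linarith [min_le_right δ₁ δ₂])) not_false
  choose δ hδpos hδ using key
  obtain ⟨T, -, hT⟩ := isCompact_Icc.elim_nhds_subcover (fun x => Metric.ball x (δ x))
    (fun x _ => Metric.ball_mem_nhds x (hδpos x))
  refine Set.Finite.subset T.finite_toSet fun t ht => ?_
  obtain ⟨x, hxT, hx⟩ := Set.mem_iUnion₂.1 (hT ht.1)
  rw [Metric.mem_ball, Real.dist_eq] at hx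
  exact (hδ x t ht hx) ▸ hxT

lemma disc_countable (hξ : IsCadlag ξ) : (Disc ξ).Countable := by
  have hsub : Disc ξ ⊆ ⋃ n : ℕ, {t ∈ Icc (0:ℝ) 1 | 1/((n:ℝ)+1) ≤ |ξ t - leftVal ξ t|} := by
    rintro t ⟨ht, hne⟩
    have hpos : 0 < |ξ t - leftVal ξ t| := abs_pos.2 (sub_ne_zero.2 hne)
    obtain ⟨n, hn⟩ := exists_nat_one_div_lt hpos
    exact mem_iUnion.2 ⟨n, ht, hn.le⟩
  exact (Set.countable_iUnion fun n =>
    (disc_finite_of_big hξ (by positivity)).countable).mono hsub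

end


noncomputable section ConstrA
variable (f : ℕ → ℝ)

def wgt (n : ℕ) : ℝ := (1/2:ℝ)^n * (1/2)

lemma wgt_pos (n : ℕ) : 0 < wgt n := by unfold wgt; positivity

lemma wgt_summable : Summable wgt := summable_geometric_two.mul_right _

lemma wgt_tsum : ∑' n, wgt n = 1 := by
  unfold wgt; rw [tsum_mul_right, tsum_geometric_two]; norm_num

lemma ite_wgt_summable (p : ℕ → Prop) [DecidablePred p] :
    Summable (fun n => if p n then wgt n else 0) := by
  apply Summable.of_nonneg_of_le (fun n => ?_) (fun n => ?_) wgt_summable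
  · split <;> simp [le_of_lt (wgt_pos n)]
  · split <;> simp [le_of_lt (wgt_pos n)]

lemma ite_wgt_nonneg (p : ℕ → Prop) [DecidablePred p] :
    0 ≤ ∑' n, if p n then wgt n else 0 :=
  tsum_nonneg fun n => by split <;> simp [le_of_lt (wgt_pos n)]

lemma ite_wgt_le_one (p : ℕ → Prop) [DecidablePred p] :
    (∑' n, if p n then wgt n else 0) ≤ 1 := by
  rw [← wgt_tsum]
  exact Summable.tsum_le_tsum (fun n => by split <;> simp [le_of_lt (wgt_pos n)])
    (ite_wgt_summable p) wgt_summable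

lemma ite_wgt_mono (p q : ℕ → Prop) [DecidablePred p] [DecidablePred q] (h : ∀ n, p n → q n) :
    (∑' n, if p n then wgt n else 0) ≤ ∑' n, if q n then wgt n else 0 := by
  apply Summable.tsum_le_tsum _ (ite_wgt_summable p) (ite_wgt_summable q)
  intro n
  by_cases hp : p n
  · simp [hp, h n hp]
  · simp [hp]; split <;> simp [le_of_lt (wgt_pos n)]

lemma ite_wgt_tail {p : ℕ → Prop} [DecidablePred p] {N : ℕ} (h : ∀ n < N, ¬ p n) :
    (∑' n, if p n then wgt n else 0) ≤ (1/2:ℝ)^N := by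
  have h1 : (∑' n, if p n then wgt n else 0) ≤ ∑' n, if N ≤ n then wgt n else 0 := by
    apply ite_wgt_mono
    intro n hn
    by_contra hN
    exact h n (by omega) hn
  have h2 : (∑' n, if N ≤ n then wgt n else 0) = (1/2:ℝ)^N := by
    have hs := ite_wgt_summable (fun n => N ≤ n)
    rw [← Summable.sum_add_tsum_nat_add N hs]
    have e1 : (∑ i ∈ Finset.range N, if N ≤ i then wgt i else 0) = 0 := by
      apply Finset.sum_eq_zero
      intro i hi
      rw [Finset.mem_range] at hi
      simp [Nat.not_le.2 hi]
    have e2 : (∑' (i : ℕ), if N ≤ i + N then wgt (i + N) else 0) = ∑' i, (1/2:ℝ)^N * wgt i := by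
      congr 1; funext i
      rw [if_pos (Nat.le_add_left N i)]
      unfold wgt
      rw [pow_add]; ring
    rw [e1, e2, tsum_mul_left, wgt_tsum, zero_add, mul_one]
  linarith

def Sfun (t : ℝ) : ℝ := ∑' n, if f n ≤ t then wgt n else 0
def Ffun (t : ℝ) : ℝ := t + Sfun f t
def Gfun (t : ℝ) : ℝ := t + ∑' n, if f n < t then wgt n else 0

variable {f}

lemma Sfun_nonneg (t : ℝ) : 0 ≤ Sfun f t := ite_wgt_nonneg _
lemma Sfun_le_one (t : ℝ) : Sfun f t ≤ 1 := ite_wgt_le_one _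

lemma Sfun_mono {t t' : ℝ} (h : t ≤ t') : Sfun f t ≤ Sfun f t' :=
  ite_wgt_mono _ _ fun n hn => le_trans hn h

lemma Ffun_strictMono : StrictMono (Ffun f) := fun t t' h =>
  add_lt_add_of_lt_of_le h (Sfun_mono h.le)

lemma Gfun_le_Ffun (t : ℝ) : Gfun f t ≤ Ffun f t :=
  add_le_add (le_refl t) (ite_wgt_mono _ _ fun n hn => le_of_lt hn)

lemma Ffun_lt_Gfun {t' t : ℝ} (h : t' < t) : Ffun f t' < Gfun f t :=
  add_lt_add_of_lt_of_le h (ite_wgt_mono _ _ fun n hn => lt_of_le_of_lt hn h)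

lemma Gfun_mono {t t' : ℝ} (h : t ≤ t') : Gfun f t ≤ Gfun f t' :=
  add_le_add h (ite_wgt_mono _ _ fun n hn => lt_of_lt_of_le hn h)

/-- split: for t ≤ t', S t' = S t + middle part -/
lemma Sfun_split {t t' : ℝ} (h : t ≤ t') :
    Sfun f t' = Sfun f t + ∑' n, if t < f n ∧ f n ≤ t' then wgt n else 0 := by
  unfold Sfun
  rw [← Summable.tsum_add (ite_wgt_summable _) (ite_wgt_summable _)]
  congr 1; funext n
  by_cases h1 : f n ≤ t
  · rw [if_pos h1, if_pos (le_trans h1 h), if_neg (by push_neg; intro hc; linarith), add_zero]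
  · push_neg at h1
    by_cases h2 : f n ≤ t'
    · rw [if_pos h2, if_neg (not_le.2 h1), if_pos ⟨h1, h2⟩, zero_add]
    · rw [if_neg h2, if_neg (not_le.2 h1), if_neg (fun hc => h2 hc.2)]
      norm_num
  
lemma Gfun_split {t' t : ℝ} (h : t' < t) :
    Gfun f t = t + Sfun f t' + ∑' n, if t' < f n ∧ f n < t then wgt n else 0 := by
  unfold Gfun Sfun
  rw [add_assoc, ← Summable.tsum_add (ite_wgt_summable _) (ite_wgt_summable _)]
  congr 2; funext n
  by_cases h1 : f n ≤ t'
  · rw [if_pos (lt_of_le_of_lt h1 h), if_pos h1, if_neg (by push_neg; intro hc; linarith), add_zero]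
  · push_neg at h1
    by_cases h2 : f n < t
    · rw [if_pos h2, if_neg (not_le.2 h1), if_pos ⟨h1, h2⟩, zero_add]
    · rw [if_neg h2, if_neg (not_le.2 h1), if_neg (fun hc => h2 hc.2), add_zero]

lemma Ffun_sub_Gfun (t : ℝ) :
    Ffun f t - Gfun f t = ∑' n, if f n = t then wgt n else 0 := by
  unfold Ffun Gfun Sfun
  have : (∑' n, if f n ≤ t then wgt n else 0)
      = (∑' n, if f n < t then wgt n else 0) + ∑' n, if f n = t then wgt n else 0 := by
    rw [← Summable.tsum_add (ite_wgt_summable _) (ite_wgt_summable _)]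
    congr 1; funext n
    rcases lt_trichotomy (f n) t with h | h | h
    · rw [if_pos h.le, if_pos h, if_neg h.ne, add_zero]
    · rw [if_pos h.le, if_neg (by simp [h]), if_pos h, zero_add]
    · rw [if_neg (not_le.2 h), if_neg (by exact not_lt.2 h.le), if_neg (ne_of_gt h), add_zero]
  rw [this]; ring

lemma Gfun_lt_Ffun_of_mem {t : ℝ} (h : t ∈ Set.range f) : Gfun f t < Ffun f t := by
  obtain ⟨n, hn⟩ := h
  have h1 : wgt n ≤ ∑' m, if f m = t then wgt m else 0 := by
    have := Summable.le_tsum (ite_wgt_summable (fun m => f m = t)) n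
      (fun m _ => by split <;> simp [le_of_lt (wgt_pos m)])
    rwa [if_pos hn] at this
  have := Ffun_sub_Gfun (f := f) t
  linarith [wgt_pos n]

/-- `F` is right-continuous, quantitatively. -/
lemma Ffun_right_cont (t : ℝ) {ε : ℝ} (hε : 0 < ε) :
    ∃ δ > 0, ∀ t', t ≤ t' → t' < t + δ → Ffun f t' ≤ Ffun f t + ε := by
  obtain ⟨N, hN⟩ := exists_pow_lt_of_lt_one (show (0:ℝ) < ε/2 by linarith)
    (show (1/2:ℝ) < 1 by norm_num)
  have hgap : ∃ δ > 0, ∀ n < N, t < f n → t + δ ≤ f n := by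
    clear hN
    induction N with
    | zero => exact ⟨1, one_pos, fun n hn => absurd hn (Nat.not_lt_zero n)⟩
    | succ k ih =>
      obtain ⟨δ, hδpos, hδ⟩ := ih
      by_cases hk : t < f k
      · exact ⟨min δ (f k - t), lt_min hδpos (by linarith), fun n hn ht => by
          rcases Nat.lt_succ_iff_lt_or_eq.1 hn with h | h
          · linarith [hδ n h ht, min_le_left δ (f k - t)]
          · subst h; linarith [min_le_right δ (f n - t)]⟩
      · exact ⟨δ, hδpos, fun n hn ht => by
          rcases Nat.lt_succ_iff_lt_or_eq.1 hn with h | h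
          · exact hδ n h ht
          · subst h; exact absurd ht hk⟩
  obtain ⟨δ₀, hδ₀pos, hδ₀⟩ := hgap
  refine ⟨min δ₀ (ε/2), lt_min hδ₀pos (by linarith), fun t' h1 h2 => ?_⟩
  have hsplit := Sfun_split (f := f) h1
  have htail : (∑' n, if t < f n ∧ f n ≤ t' then wgt n else 0) ≤ (1/2:ℝ)^N := by
    apply ite_wgt_tail
    intro n hn ⟨ha, hb⟩
    have := hδ₀ n hn ha
    have := min_le_left δ₀ (ε/2)
    linarith
  have : t' ≤ t + ε/2 := by
    have := min_le_right δ₀ (ε/2); linarith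
  unfold Ffun
  rw [hsplit]
  linarith

/-- `G` is left-continuous relative to `F`, quantitatively. -/
lemma Gfun_left_cont (t : ℝ) {ε : ℝ} (hε : 0 < ε) :
    ∃ δ > 0, ∀ t', t - δ < t' → t' < t → Gfun f t ≤ Ffun f t' + ε := by
  obtain ⟨N, hN⟩ := exists_pow_lt_of_lt_one (show (0:ℝ) < ε/2 by linarith)
    (show (1/2:ℝ) < 1 by norm_num)
  have hgap : ∃ δ > 0, ∀ n < N, f n < t → f n ≤ t - δ := by
    clear hN
    induction N with
    | zero => exact ⟨1, one_pos, fun n hn => absurd hn (Nat.not_lt_zero n)⟩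
    | succ k ih =>
      obtain ⟨δ, hδpos, hδ⟩ := ih
      by_cases hk : f k < t
      · exact ⟨min δ (t - f k), lt_min hδpos (by linarith), fun n hn ht => by
          rcases Nat.lt_succ_iff_lt_or_eq.1 hn with h | h
          · linarith [hδ n h ht, min_le_left δ (t - f k)]
          · subst h; linarith [min_le_right δ (t - f n)]⟩
      · exact ⟨δ, hδpos, fun n hn ht => by
          rcases Nat.lt_succ_iff_lt_or_eq.1 hn with h | h
          · exact hδ n h ht
          · subst h; exact absurd ht hk⟩
  obtain ⟨δ₀, hδ₀pos, hδ₀⟩ := hgap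
  refine ⟨min δ₀ (ε/2), lt_min hδ₀pos (by linarith), fun t' h1 h2 => ?_⟩
  have hsplit := Gfun_split (f := f) h2
  have htail : (∑' n, if t' < f n ∧ f n < t then wgt n else 0) ≤ (1/2:ℝ)^N := by
    apply ite_wgt_tail
    intro n hn ⟨ha, hb⟩
    have h3 := hδ₀ n hn hb
    have := min_le_left δ₀ (ε/2)
    linarith
  have h4 : t - t' ≤ ε/2 := by
    have := min_le_right δ₀ (ε/2); linarith
  unfold Ffun
  rw [hsplit]
  linarith

end ConstrA

noncomputable section ConstrB
variable (f : ℕ → ℝ)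

def vfun (s : ℝ) : ℝ := sInf {t | s ≤ Ffun f t}

variable {f}

lemma vset_nonempty (s : ℝ) : {t | s ≤ Ffun f t}.Nonempty :=
  ⟨s, le_add_of_nonneg_right (Sfun_nonneg s)⟩

lemma vset_bddBelow (s : ℝ) : BddBelow {t | s ≤ Ffun f t} := by
  refine ⟨s - 2, fun t ht => ?_⟩
  have h1 : Ffun f t ≤ t + 1 := add_le_add (le_refl t) (Sfun_le_one t)
  have h2 : s ≤ Ffun f t := ht
  linarith

lemma vfun_le {s t : ℝ} (h : s ≤ Ffun f t) : vfun f s ≤ t :=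
  csInf_le (vset_bddBelow s) h

lemma le_vfun {s t : ℝ} (h : ∀ t' , s ≤ Ffun f t' → t ≤ t') : t ≤ vfun f s :=
  le_csInf (vset_nonempty s) h

lemma vfun_mono {s s' : ℝ} (h : s ≤ s') : vfun f s ≤ vfun f s' :=
  le_vfun fun t' ht' => vfun_le (le_trans h ht')

lemma vfun_Ffun (t : ℝ) : vfun f (Ffun f t) = t := by
  apply le_antisymm (vfun_le le_rfl)
  apply le_vfun
  intro t' ht'
  by_contra hc
  push_neg at hc
  exact absurd ht' (not_le.2 (Ffun_strictMono hc))

lemma Ffun_vfun_ge (s : ℝ) : s ≤ Ffun f (vfun f s) := by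
  by_contra hc
  push_neg at hc
  set t := vfun f s with htdef
  obtain ⟨δ, hδpos, hδ⟩ := Ffun_right_cont (f := f) t (show 0 < (s - Ffun f t)/2 by linarith)
  have : t + δ ≤ vfun f s := by
    apply le_vfun
    intro t' ht'
    by_contra hc'
    push_neg at hc'
    rcases le_or_gt t t' with h | h
    · have := hδ t' h hc'
      linarith
    · have : Ffun f t' < Ffun f t := Ffun_strictMono h
      linarith
  linarith

lemma Gfun_vfun_le (s : ℝ) : Gfun f (vfun f s) ≤ s := by
  apply le_of_forall_pos_le_add
  intro ε hε
  set t := vfun f s with htdef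
  obtain ⟨δ, hδpos, hδ⟩ := Gfun_left_cont (f := f) t hε
  have hkey : Gfun f t ≤ Ffun f (t - δ/2) + ε := hδ (t - δ/2) (by linarith) (by linarith)
  have hnot : ¬ (s ≤ Ffun f (t - δ/2)) := by
    intro hc
    have := vfun_le (f := f) hc
    rw [← htdef] at this
    linarith
  push_neg at hnot
  linarith

lemma vfun_interval {t s : ℝ} (h1 : Gfun f t ≤ s) (h2 : s ≤ Ffun f t) : vfun f s = t := by
  apply le_antisymm (vfun_le h2)
  apply le_vfun
  intro t' ht'
  by_contra hc
  push_neg at hc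
  have := Ffun_lt_Gfun (f := f) hc
  linarith [ht']

lemma vfun_cont : Continuous (vfun f) := by
  rw [Metric.continuous_iff]
  intro s₀ ε hε
  set t₀ := vfun f s₀ with ht₀
  have hF : s₀ ≤ Ffun f t₀ := Ffun_vfun_ge s₀
  have hG : Gfun f t₀ ≤ s₀ := Gfun_vfun_le s₀
  have h1 : s₀ < Ffun f (t₀ + ε/2) := lt_of_le_of_lt hF (Ffun_strictMono (by linarith))
  have h2 : Ffun f (t₀ - ε/2) < s₀ :=
    lt_of_lt_of_le (Ffun_lt_Gfun (by linarith)) hG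
  refine ⟨min (Ffun f (t₀ + ε/2) - s₀) (s₀ - Ffun f (t₀ - ε/2)), lt_min (by linarith) (by linarith), ?_⟩
  intro s hs
  rw [Real.dist_eq] at hs ⊢
  have hd1 := min_le_left (Ffun f (t₀ + ε/2) - s₀) (s₀ - Ffun f (t₀ - ε/2))
  have hd2 := min_le_right (Ffun f (t₀ + ε/2) - s₀) (s₀ - Ffun f (t₀ - ε/2))
  obtain ⟨ha, hb⟩ := abs_lt.1 hs
  have hup : vfun f s ≤ t₀ + ε/2 := vfun_le (by linarith)
  have hdown : t₀ - ε/2 ≤ vfun f s := by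
    have : Ffun f (t₀ - ε/2) ≤ s := by linarith
    calc t₀ - ε/2 = vfun f (Ffun f (t₀ - ε/2)) := (vfun_Ffun _).symm
      _ ≤ vfun f s := vfun_mono this
  rw [abs_lt]
  constructor <;> [linarith; linarith]

lemma vfun_nonneg (hf0 : ∀ n, 0 ≤ f n) {s : ℝ} (hs : 0 ≤ s) : 0 ≤ vfun f s := by
  apply le_vfun
  intro t' ht'
  by_contra hc
  push_neg at hc
  have hS : Sfun f t' = 0 := by
    unfold Sfun
    have hz : ∀ n : ℕ, (if f n ≤ t' then wgt n else 0) = 0 := fun n =>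
      if_neg (not_le.2 (lt_of_lt_of_le hc (hf0 n)))
    rw [tsum_congr hz, tsum_zero]
  have : Ffun f t' = t' := by unfold Ffun; rw [hS, add_zero]
  rw [this] at ht'
  linarith

lemma vfun_le_one {s : ℝ} (hs : s ≤ Ffun f 1) : vfun f s ≤ 1 := vfun_le hs

lemma Gfun_zero (hf0 : ∀ n, 0 ≤ f n) : Gfun f 0 = 0 := by
  unfold Gfun
  have hz : ∀ n : ℕ, (if f n < 0 then wgt n else 0) = 0 := fun n =>
    if_neg (not_lt.2 (hf0 n))
  rw [tsum_congr hz, tsum_zero, add_zero]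

end ConstrB

noncomputable section ConstrC
open Set
variable {ξ : ℝ → ℝ} {f : ℕ → ℝ}

def ufun (ξ : ℝ → ℝ) (f : ℕ → ℝ) (s : ℝ) : ℝ :=
  leftVal ξ (vfun f s) +
    ((s - Gfun f (vfun f s)) / (Ffun f (vfun f s) - Gfun f (vfun f s))) *
      (ξ (vfun f s) - leftVal ξ (vfun f s))

lemma ufun_of_vfun_eq {s t : ℝ} (hv : vfun f s = t) :
    ufun ξ f s = leftVal ξ t +
      ((s - Gfun f t) / (Ffun f t - Gfun f t)) * (ξ t - leftVal ξ t) := by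
  simp only [ufun, hv]

lemma range_f_nonneg (hf : Set.range f = Disc ξ ∪ {0}) : ∀ n, 0 ≤ f n := by
  intro n
  have : f n ∈ Disc ξ ∪ {0} := hf ▸ Set.mem_range_self n
  rcases this with h | h
  · exact h.1.1
  · simp at h; rw [h]

lemma eq_leftVal_of_not_mem (hf : Set.range f = Disc ξ ∪ {0}) {t : ℝ}
    (ht : t ∈ Icc (0:ℝ) 1) (hmem : t ∉ Set.range f) : ξ t = leftVal ξ t := by
  by_contra hne
  exact hmem (hf ▸ Or.inl ⟨ht, hne⟩)

lemma FG_cases (hf : Set.range f = Disc ξ ∪ {0}) {t : ℝ} (ht : t ∈ Icc (0:ℝ) 1) :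
    Gfun f t < Ffun f t ∨ (Ffun f t = Gfun f t ∧ ξ t = leftVal ξ t ∧ t ≠ 0) := by
  rcases eq_or_lt_of_le (Gfun_le_Ffun (f := f) t) with h | h
  · right
    have hmem : t ∉ Set.range f := fun hc => absurd (Gfun_lt_Ffun_of_mem hc) (by rw [h]; exact lt_irrefl _)
    refine ⟨h.symm, eq_leftVal_of_not_mem hf ht hmem, fun hc => hmem ?_⟩
    rw [hf, hc]; right; rfl
  · left; exact h

lemma convex_mem {a b lam : ℝ} (h0 : 0 ≤ lam) (h1 : lam ≤ 1) :
    a + lam * (b - a) ∈ Icc (min a b) (max a b) := by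
  rcases le_total a b with h | h
  · rw [min_eq_left h, max_eq_right h]
    constructor <;> nlinarith
  · rw [min_eq_right h, max_eq_left h]
    constructor <;> nlinarith

lemma between_abs_le {a b c x ε : ℝ} (hx : x ∈ Icc (min a b) (max a b))
    (ha : |a - c| ≤ ε) (hb : |b - c| ≤ ε) : |x - c| ≤ ε := by
  rw [abs_le] at ha hb ⊢
  rcases le_total a b with h | h
  · rw [min_eq_left h, max_eq_right h] at hx
    exact ⟨by linarith [hx.1, ha.1], by linarith [hx.2, hb.2]⟩
  · rw [min_eq_right h, max_eq_left h] at hx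
    exact ⟨by linarith [hx.1, hb.1], by linarith [hx.2, ha.2]⟩

lemma ufun_vfun_mem_graph (hf : Set.range f = Disc ξ ∪ {0}) {s : ℝ}
    (hs : s ∈ Icc 0 (Ffun f 1)) : (ufun ξ f s, vfun f s) ∈ extGraph ξ := by
  set t := vfun f s with hT
  have htIcc : t ∈ Icc (0:ℝ) 1 := ⟨vfun_nonneg (range_f_nonneg hf) hs.1, vfun_le_one hs.2⟩
  have hG : Gfun f t ≤ s := Gfun_vfun_le s
  have hF : s ≤ Ffun f t := Ffun_vfun_ge s
  refine ⟨htIcc, ?_⟩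
  show ufun ξ f s ∈ Icc (min (leftVal ξ t) (ξ t)) (max (leftVal ξ t) (ξ t))
  rw [ufun_of_vfun_eq hT.symm]
  rcases FG_cases hf htIcc with hlt | ⟨heq, hval, -⟩
  · exact convex_mem (div_nonneg (by linarith) (by linarith))
      ((div_le_one (by linarith)).2 (by linarith))
  · rw [hval]
    simp [sub_self, min_self, max_self]

lemma Gfun_nonneg {t : ℝ} (ht : 0 ≤ t) : 0 ≤ Gfun f t :=
  add_nonneg ht (ite_wgt_nonneg _)

lemma extGraph_subset_image (hf : Set.range f = Disc ξ ∪ {0}) {p : ℝ × ℝ}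
    (hp : p ∈ extGraph ξ) :
    ∃ s ∈ Icc 0 (Ffun f 1), ufun ξ f s = p.1 ∧ vfun f s = p.2 := by
  obtain ⟨htIcc, hx⟩ := hp
  set x := p.1
  set t := p.2
  by_cases hd : ξ t = leftVal ξ t
  · have hxx : x = ξ t := by
      rw [hd, min_self, max_self] at hx
      rw [hd]
      exact le_antisymm hx.2 hx.1
    refine ⟨Ffun f t, ⟨?_, (Ffun_strictMono.monotone htIcc.2 : _)⟩, ?_, vfun_Ffun t⟩
    · exact add_nonneg htIcc.1 (Sfun_nonneg t)
    · rw [ufun_of_vfun_eq (vfun_Ffun t), ← hd, sub_self, mul_zero, add_zero, hxx, hd]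
  · have htD : t ∈ Set.range f := by rw [hf]; exact Or.inl ⟨htIcc, hd⟩
    have hFG := Gfun_lt_Ffun_of_mem htD
    have hdne : ξ t - leftVal ξ t ≠ 0 := sub_ne_zero.2 hd
    set lam := (x - leftVal ξ t) / (ξ t - leftVal ξ t) with hlamdef
    have hlam : 0 ≤ lam ∧ lam ≤ 1 := by
      rcases lt_or_gt_of_ne hdne with hneg | hpos
      · have h1 : ξ t ≤ leftVal ξ t := by linarith
        rw [min_eq_right h1, max_eq_left h1] at hx
        have : lam = (leftVal ξ t - x) / (leftVal ξ t - ξ t) := by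
          rw [hlamdef, ← neg_div_neg_eq]; ring_nf
        rw [this]
        constructor
        · exact div_nonneg (by linarith [hx.2]) (by linarith)
        · exact (div_le_one (by linarith)).2 (by linarith [hx.1])
      · have h1 : leftVal ξ t ≤ ξ t := by linarith
        rw [min_eq_left h1, max_eq_right h1] at hx
        constructor
        · exact div_nonneg (by linarith [hx.1]) (by linarith)
        · exact (div_le_one (by linarith)).2 (by linarith [hx.2])
    set s := Gfun f t + lam * (Ffun f t - Gfun f t) with hsdef
    have hsG : Gfun f t ≤ s := le_add_of_nonneg_right (mul_nonneg hlam.1 (by linarith))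
    have hsF : s ≤ Ffun f t := by nlinarith [hlam.2]
    have hv : vfun f s = t := vfun_interval hsG hsF
    refine ⟨s, ⟨le_trans (Gfun_nonneg htIcc.1) hsG, le_trans hsF (Ffun_strictMono.monotone htIcc.2)⟩, ?_, hv⟩
    rw [ufun_of_vfun_eq hv]
    have h2 : s - Gfun f t = lam * (Ffun f t - Gfun f t) := by rw [hsdef]; ring
    rw [h2, mul_div_assoc, div_self (by linarith : Ffun f t - Gfun f t ≠ 0), mul_one,
      hlamdef, div_mul_cancel₀ _ hdne]
    ring

lemma ufun_abs (ξ : ℝ → ℝ) (s : ℝ) :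
    |leftVal ξ (vfun f s) - ufun ξ f s| =
      (s - Gfun f (vfun f s)) / (Ffun f (vfun f s) - Gfun f (vfun f s)) *
        |ξ (vfun f s) - leftVal ξ (vfun f s)| := by
  have hG := Gfun_vfun_le (f := f) s
  have hF := Ffun_vfun_ge (f := f) s
  have hGF := Gfun_le_Ffun (f := f) (vfun f s)
  have hlam : 0 ≤ (s - Gfun f (vfun f s)) / (Ffun f (vfun f s) - Gfun f (vfun f s)) :=
    div_nonneg (by linarith) (by linarith)
  rw [show leftVal ξ (vfun f s) - ufun ξ f s
      = -(((s - Gfun f (vfun f s)) / (Ffun f (vfun f s) - Gfun f (vfun f s))) *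
          (ξ (vfun f s) - leftVal ξ (vfun f s))) by rw [ufun]; ring]
  rw [abs_neg, abs_mul, abs_of_nonneg hlam]

lemma ufun_order {s₁ s₂ : ℝ} (hle : s₁ ≤ s₂) :
    vfun f s₁ < vfun f s₂ ∨ (vfun f s₁ = vfun f s₂ ∧
      |leftVal ξ (vfun f s₁) - ufun ξ f s₁| ≤ |leftVal ξ (vfun f s₂) - ufun ξ f s₂|) := by
  rcases lt_or_eq_of_le (vfun_mono (f := f) hle) with h | h
  · exact Or.inl h
  · right
    refine ⟨h, ?_⟩
    rw [ufun_abs ξ s₁, ufun_abs ξ s₂, ← h]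
    apply mul_le_mul_of_nonneg_right _ (abs_nonneg _)
    have h1G : Gfun f (vfun f s₁) ≤ s₁ := Gfun_vfun_le s₁
    have h1F : s₁ ≤ Ffun f (vfun f s₁) := Ffun_vfun_ge s₁
    have h2G : Gfun f (vfun f s₁) ≤ s₂ := by rw [h]; exact Gfun_vfun_le s₂
    have h2F : s₂ ≤ Ffun f (vfun f s₁) := by rw [h]; exact Ffun_vfun_ge s₂
    rcases eq_or_lt_of_le (Gfun_le_Ffun (f := f) (vfun f s₁)) with hFG | hFG
    · have e1 : s₁ = Gfun f (vfun f s₁) := le_antisymm (hFG ▸ h1F) h1G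
      have e2 : s₂ = Gfun f (vfun f s₁) := le_antisymm (hFG ▸ h2F) h2G
      rw [e1, e2]
    · exact (div_le_div_iff_of_pos_right (by linarith : (0:ℝ) < Ffun f (vfun f s₁) - Gfun f (vfun f s₁))).2 (by linarith)

lemma ufun_at_F (hf : Set.range f = Disc ξ ∪ {0}) {t : ℝ} (ht : t ∈ Icc (0:ℝ) 1) :
    ufun ξ f (Ffun f t) = ξ t := by
  rw [ufun_of_vfun_eq (vfun_Ffun t)]
  rcases FG_cases hf ht with hlt | ⟨heq, hval, -⟩
  · rw [div_self (by linarith : Ffun f t - Gfun f t ≠ 0), one_mul]; ring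
  · rw [← hval, sub_self, mul_zero, add_zero, hval]

lemma ufun_cont (hξ : IsCadlag ξ) (hf : Set.range f = Disc ξ ∪ {0}) :
    ContinuousOn (ufun ξ f) (Icc 0 (Ffun f 1)) := by
  rw [Metric.continuousOn_iff]
  intro s₀ hs₀ ε hε
  suffices h : ∃ δ > 0, ∀ s ∈ Icc 0 (Ffun f 1), |s - s₀| < δ → |ufun ξ f s - ufun ξ f s₀| ≤ ε/2 by
    obtain ⟨δ, hδpos, hδ⟩ := h
    refine ⟨δ, hδpos, fun a ha hdist => ?_⟩
    rw [Real.dist_eq] at hdist ⊢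
    linarith [hδ a ha hdist]
  have hε' : 0 < ε/2 := by linarith
  set ε' := ε/2
  set t₀ := vfun f s₀ with hT₀
  have hG0 : Gfun f t₀ ≤ s₀ := Gfun_vfun_le s₀
  have hF0 : s₀ ≤ Ffun f t₀ := Ffun_vfun_ge s₀
  have ht₀Icc : t₀ ∈ Icc (0:ℝ) 1 := ⟨vfun_nonneg (range_f_nonneg hf) hs₀.1, vfun_le_one hs₀.2⟩
  -- the affine estimate, used on both sides
  have haffine : Gfun f t₀ < Ffun f t₀ →
      ∀ s, Gfun f t₀ ≤ s → s ≤ Ffun f t₀ →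
        |s - s₀| < ε' * (Ffun f t₀ - Gfun f t₀) / (|ξ t₀ - leftVal ξ t₀| + 1) →
        |ufun ξ f s - ufun ξ f s₀| ≤ ε' := by
    intro hFG s hsG hsF hd
    have hv : vfun f s = t₀ := vfun_interval hsG hsF
    rw [ufun_of_vfun_eq hv, ufun_of_vfun_eq hT₀.symm]
    have key : |s - s₀| * |ξ t₀ - leftVal ξ t₀| ≤ ε' * (Ffun f t₀ - Gfun f t₀) := by
      have h1 : |s - s₀| * |ξ t₀ - leftVal ξ t₀| ≤
          (ε' * (Ffun f t₀ - Gfun f t₀) / (|ξ t₀ - leftVal ξ t₀| + 1)) * |ξ t₀ - leftVal ξ t₀| :=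
        mul_le_mul_of_nonneg_right hd.le (abs_nonneg _)
      have h2 : (ε' * (Ffun f t₀ - Gfun f t₀) / (|ξ t₀ - leftVal ξ t₀| + 1)) * |ξ t₀ - leftVal ξ t₀|
          ≤ ε' * (Ffun f t₀ - Gfun f t₀) := by
        rw [div_mul_eq_mul_div, div_le_iff₀ (by positivity : (0:ℝ) < |ξ t₀ - leftVal ξ t₀| + 1)]
        nlinarith [abs_nonneg (ξ t₀ - leftVal ξ t₀), mul_pos hε' (by linarith : (0:ℝ) < Ffun f t₀ - Gfun f t₀)]
      linarith
    have e : leftVal ξ t₀ + (s - Gfun f t₀) / (Ffun f t₀ - Gfun f t₀) * (ξ t₀ - leftVal ξ t₀)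
        - (leftVal ξ t₀ + (s₀ - Gfun f t₀) / (Ffun f t₀ - Gfun f t₀) * (ξ t₀ - leftVal ξ t₀))
        = ((s - s₀) / (Ffun f t₀ - Gfun f t₀)) * (ξ t₀ - leftVal ξ t₀) := by
      field_simp
      ring
    rw [e, abs_mul, abs_div, abs_of_pos (by linarith : (0:ℝ) < Ffun f t₀ - Gfun f t₀),
      div_mul_eq_mul_div, div_le_iff₀ (by linarith : (0:ℝ) < Ffun f t₀ - Gfun f t₀)]
    linarith
  -- right-hand bound
  have hright : ∃ δ > 0, ∀ s ∈ Icc 0 (Ffun f 1), s₀ < s → s < s₀ + δ →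
      |ufun ξ f s - ufun ξ f s₀| ≤ ε' := by
    rcases lt_or_eq_of_le hF0 with hlt | heqF
    · have hFG : Gfun f t₀ < Ffun f t₀ := lt_of_le_of_lt hG0 hlt
      refine ⟨min (Ffun f t₀ - s₀) (ε' * (Ffun f t₀ - Gfun f t₀) / (|ξ t₀ - leftVal ξ t₀| + 1)),
        lt_min (by linarith) (div_pos (mul_pos hε' (by linarith)) (by positivity)), fun s hs h1 h2 => ?_⟩
      have hd1 := min_le_left (Ffun f t₀ - s₀) (ε' * (Ffun f t₀ - Gfun f t₀) / (|ξ t₀ - leftVal ξ t₀| + 1))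
      have hd2 := min_le_right (Ffun f t₀ - s₀) (ε' * (Ffun f t₀ - Gfun f t₀) / (|ξ t₀ - leftVal ξ t₀| + 1))
      apply haffine hFG s (by linarith) (by linarith)
      rw [abs_of_pos (by linarith : (0:ℝ) < s - s₀)]
      linarith
    · by_cases ht1 : t₀ = 1
      · refine ⟨1, one_pos, fun s hs h1 h2 => absurd h1 (not_lt.2 ?_)⟩
        calc s ≤ Ffun f 1 := hs.2
          _ = Ffun f t₀ := by rw [ht1]
          _ = s₀ := heqF.symm
      · have ht1' : t₀ < 1 := lt_of_le_of_ne ht₀Icc.2 ht1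
        obtain ⟨δ', hδ'pos, hδ'⟩ := cadlag_right_squeeze hξ ⟨ht₀Icc.1, ht1'⟩ hε'
        refine ⟨Ffun f (t₀ + δ'/2) - s₀, by
          rw [heqF]; linarith [Ffun_strictMono (f := f) (show t₀ < t₀ + δ'/2 by linarith)], fun s hs h1 h2 => ?_⟩
        have hvle : vfun f s ≤ t₀ + δ'/2 := vfun_le (by linarith)
        have hvgt : t₀ < vfun f s := by
          rcases lt_or_eq_of_le (vfun_mono (f := f) h1.le) with h | h
          · exact h
          · exfalso
            have hF2 := Ffun_vfun_ge (f := f) s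
            rw [← h, ← hT₀] at hF2
            linarith [heqF]
        have hr1 : vfun f s ≤ 1 := vfun_le_one hs.2
        obtain ⟨hA, hB⟩ := hδ' (vfun f s) hvgt (by linarith) hr1
        have hmem := ufun_vfun_mem_graph hf hs
        have husq : |ufun ξ f s - ξ t₀| ≤ ε' := between_abs_le hmem.2 hB hA
        have hu0 : ufun ξ f s₀ = ξ t₀ := by rw [heqF]; exact ufun_at_F hf ht₀Icc
        rw [hu0]; exact husq
  -- left-hand bound
  have hleft : ∃ δ > 0, ∀ s ∈ Icc 0 (Ffun f 1), s < s₀ → s₀ - δ < s →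
      |ufun ξ f s - ufun ξ f s₀| ≤ ε' := by
    rcases lt_or_eq_of_le hG0 with hlt | heqG
    · have hFG : Gfun f t₀ < Ffun f t₀ := lt_of_lt_of_le hlt hF0
      refine ⟨min (s₀ - Gfun f t₀) (ε' * (Ffun f t₀ - Gfun f t₀) / (|ξ t₀ - leftVal ξ t₀| + 1)),
        lt_min (by linarith) (div_pos (mul_pos hε' (by linarith)) (by positivity)), fun s hs h1 h2 => ?_⟩
      have hd1 := min_le_left (s₀ - Gfun f t₀) (ε' * (Ffun f t₀ - Gfun f t₀) / (|ξ t₀ - leftVal ξ t₀| + 1))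
      have hd2 := min_le_right (s₀ - Gfun f t₀) (ε' * (Ffun f t₀ - Gfun f t₀) / (|ξ t₀ - leftVal ξ t₀| + 1))
      apply haffine hFG s (by linarith) (by linarith)
      rw [abs_of_neg (by linarith : s - s₀ < 0)]
      linarith
    · by_cases ht0 : t₀ = 0
      · refine ⟨1, one_pos, fun s hs h1 h2 => absurd h1 (not_lt.2 ?_)⟩
        have hz : s₀ = 0 := by
          rw [← heqG, hT₀, ← hT₀, ht0, Gfun_zero (range_f_nonneg hf)]
        rw [hz]; exact hs.1
      · have ht0' : 0 < t₀ := lt_of_le_of_ne ht₀Icc.1 (Ne.symm ht0)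
        obtain ⟨δ', hδ'pos, hδ'lt, hδ'⟩ := cadlag_left_squeeze hξ ⟨ht0', ht₀Icc.2⟩ hε'
        refine ⟨s₀ - Ffun f (t₀ - δ'/2), by
          rw [← heqG]; linarith [Ffun_lt_Gfun (f := f) (show t₀ - δ'/2 < t₀ by linarith)], fun s hs h1 h2 => ?_⟩
        have hvge : t₀ - δ'/2 ≤ vfun f s := by
          calc t₀ - δ'/2 = vfun f (Ffun f (t₀ - δ'/2)) := (vfun_Ffun _).symm
            _ ≤ vfun f s := vfun_mono (by linarith)
        have hvlt : vfun f s < t₀ := by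
          rcases lt_or_eq_of_le (vfun_mono (f := f) h1.le) with h | h
          · exact h
          · exfalso
            have hG2 := Gfun_vfun_le (f := f) s
            rw [h, ← hT₀] at hG2
            linarith [heqG]
        obtain ⟨hA, hB⟩ := hδ' (vfun f s) (by linarith) hvlt
        have hmem := ufun_vfun_mem_graph hf hs
        have husq : |ufun ξ f s - Function.leftLim ξ t₀| ≤ ε' := between_abs_le hmem.2 hB hA
        have hu0 : ufun ξ f s₀ = Function.leftLim ξ t₀ := by
          rw [ufun_of_vfun_eq hT₀.symm, ← heqG, sub_self, zero_div, zero_mul, add_zero,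
            leftVal_of_ne ξ ht0]
        rw [hu0]; exact husq
  obtain ⟨δR, hδRpos, hδR⟩ := hright
  obtain ⟨δL, hδLpos, hδL⟩ := hleft
  refine ⟨min δR δL, lt_min hδRpos hδLpos, fun s hs hd => ?_⟩
  have hd1 := min_le_left δR δL
  have hd2 := min_le_right δR δL
  rcases lt_trichotomy s s₀ with h | h | h
  · obtain ⟨ha, hb⟩ := abs_lt.1 hd
    exact hδL s hs h (by linarith)
  · rw [h, sub_self, abs_zero]; linarith
  · obtain ⟨ha, hb⟩ := abs_lt.1 hd
    exact hδR s hs h (by linarith)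

theorem exists_paramRep (hξ : IsCadlag ξ) : ∃ u v : ℝ → ℝ, ParamRep ξ u v := by
  have hcnt : (Disc ξ ∪ {0} : Set ℝ).Countable :=
    (disc_countable hξ).union (Set.countable_singleton 0)
  obtain ⟨f, hf⟩ := hcnt.exists_eq_range ⟨0, Or.inr rfl⟩
  have hf' : Set.range f = Disc ξ ∪ {0} := hf.symm
  set A := Ffun f 1 with hA
  have hA1 : 1 ≤ A := le_add_of_nonneg_right (Sfun_nonneg 1)
  have hA0 : 0 < A := by linarith
  have hmaps : ∀ σ ∈ Icc (0:ℝ) 1, A * σ ∈ Icc 0 (Ffun f 1) := by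
    intro σ hσ
    exact ⟨mul_nonneg hA0.le hσ.1, by nlinarith [hσ.2]⟩
  refine ⟨fun σ => ufun ξ f (A*σ), fun σ => vfun f (A*σ), ?_, ?_, ?_, ?_⟩
  · exact (ufun_cont hξ hf').comp ((continuous_const.mul continuous_id).continuousOn) hmaps
  · exact ((vfun_cont (f := f)).comp (continuous_const.mul continuous_id)).continuousOn
  · apply Set.Subset.antisymm
    · rintro p ⟨σ, hσ, rfl⟩
      exact ufun_vfun_mem_graph hf' (hmaps σ hσ)
    · intro p hp
      obtain ⟨s, hs, hu, hv⟩ := extGraph_subset_image hf' hp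
      refine ⟨s/A, ⟨div_nonneg hs.1 hA0.le, (div_le_one hA0).2 hs.2⟩, ?_⟩
      have hAs : A * (s/A) = s := by field_simp
      show (ufun ξ f (A * (s/A)), vfun f (A * (s/A))) = p
      rw [hAs, hu, hv]
  · intro σ₁ h₁ σ₂ h₂ hle
    exact ufun_order (mul_le_mul_of_nonneg_left hle hA0.le)

end ConstrC

noncomputable section PC

variable {g : ℝ → ℝ}

lemma pc_data (hpc : PiecewiseConstant g) :
    ∃ (m : ℕ) (t : ℕ → ℝ), 0 < m ∧ t 0 = 0 ∧ t m = 1 ∧ (∀ i < m, t i < t (i+1)) ∧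
      (∀ i < m, ∀ s, t i ≤ s → s < t (i+1) → g s = g (t i)) ∧
      (∀ i j, i < j → j ≤ m → t i < t j) := by
  obtain ⟨m, t, hm, h0, h1, hlt, hconst⟩ := hpc
  refine ⟨m, t, hm, h0, h1, hlt,
    fun i hi s hs1 hs2 => hconst i hi s ⟨hs1, hs2⟩ (t i) ⟨le_rfl, hlt i hi⟩, ?_⟩
  intro i j hij hjm
  induction j with
  | zero => omega
  | succ k ih =>
    have hk : k < m := by omega
    rcases Nat.lt_succ_iff_lt_or_eq.1 hij with h | h
    · exact lt_trans (ih h (by omega)) (hlt k hk)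
    · subst h; exact hlt i hk

lemma pc_cover {m : ℕ} {t : ℕ → ℝ} (hm : 0 < m) (h0 : t 0 = 0) (h1 : t m = 1) :
    ∀ s, 0 ≤ s → s < 1 → ∃ i, i < m ∧ t i ≤ s ∧ s < t (i+1) := by
  classical
  intro s hs0 hs1
  set i := Nat.findGreatest (fun i => t i ≤ s) m with hi
  have hP : t i ≤ s := Nat.findGreatest_spec (P := fun i => t i ≤ s) (Nat.zero_le m) (by show t 0 ≤ s; rw [h0]; exact hs0)
  have him : i ≤ m := Nat.findGreatest_le m
  have hilt : i < m := by
    rcases eq_or_lt_of_le him with h | h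
    · exfalso; rw [h, h1] at hP; linarith
    · exact h
  refine ⟨i, hilt, hP, ?_⟩
  have hng : ¬ t (i+1) ≤ s :=
    Nat.findGreatest_is_greatest (P := fun i => t i ≤ s) (Nat.lt_succ_self i) (by omega)
  exact not_le.1 hng

lemma pc_coverL {m : ℕ} {t : ℕ → ℝ} (hm : 0 < m) (h0 : t 0 = 0) (h1 : t m = 1) :
    ∀ s, 0 < s → s ≤ 1 → ∃ i, i < m ∧ t i < s ∧ s ≤ t (i+1) := by
  classical
  intro s hs0 hs1
  set i := Nat.findGreatest (fun i => t i < s) m with hi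
  have hP : t i < s := Nat.findGreatest_spec (P := fun i => t i < s) (Nat.zero_le m) (by show t 0 < s; rw [h0]; exact hs0)
  have him : i ≤ m := Nat.findGreatest_le m
  have hilt : i < m := by
    rcases eq_or_lt_of_le him with h | h
    · exfalso; rw [h, h1] at hP; linarith
    · exact h
  refine ⟨i, hilt, hP, ?_⟩
  have hng : ¬ t (i+1) < s :=
    Nat.findGreatest_is_greatest (P := fun i => t i < s) (Nat.lt_succ_self i) (by omega)
  exact not_lt.1 hng

lemma pc_leftlim {m : ℕ} {t : ℕ → ℝ}
    (hconst : ∀ i < m, ∀ s, t i ≤ s → s < t (i+1) → g s = g (t i))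
    {i : ℕ} (hi : i < m) {s : ℝ} (hs1 : t i < s) (hs2 : s ≤ t (i+1)) :
    Tendsto g (𝓝[<] s) (𝓝 (g (t i))) := by
  have hmem : Ioo (t i) s ∈ 𝓝[<] s := Ioo_mem_nhdsLT_of_mem ⟨hs1, le_rfl⟩
  apply Tendsto.congr' _ tendsto_const_nhds
  filter_upwards [hmem] with x hx
  exact (hconst i hi x hx.1.le (lt_of_lt_of_le hx.2 hs2)).symm

lemma dll2_facts (hpc : PiecewiseConstant g) (hfin : (Disc g).Finite)
    (hcard : (Disc g).ncard < 2) :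
    (∀ s ∈ Icc (0:ℝ) 1, g s = 0 ∨ g s = g 1) ∧
    (∀ s ∈ Ioc (0:ℝ) 1, Tendsto g (𝓝[<] s) (𝓝 (Function.leftLim g s)) ∧
      (Function.leftLim g s = 0 ∨ Function.leftLim g s = g 1)) := by
  classical
  obtain ⟨m, t, hm, h0, h1, hlt, hconst, hstrict⟩ := pc_data hpc
  set w : ℕ → ℝ := fun j => if j = 0 then 0 else if j ≤ m then g (t (j-1)) else g 1 with hw
  have hw0 : w 0 = 0 := by simp [hw]
  have hwlast : w (m+1) = g 1 := by simp [hw]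
  have hwmid' : ∀ k, k ≤ m → w (k+1) = g (t k) := by
    intro k hk
    rcases lt_or_eq_of_le hk with h | h
    · simp [hw, Nat.succ_le_of_lt h]
    · rw [h, hwlast, h1]
  have hdisc : ∀ i, i ≤ m → w i ≠ w (i+1) → t i ∈ Disc g := by
    intro i him hne
    cases i with
    | zero =>
      rw [hw0, hwmid' 0 (Nat.zero_le m)] at hne
      refine ⟨by rw [h0]; exact ⟨le_rfl, zero_le_one⟩, ?_⟩
      rw [h0, leftVal_zero]
      exact fun hc => hne (by rw [← hc, h0])
    | succ k =>
      have hk : k < m := by omega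
      have e1 : w (k+1) = g (t k) := hwmid' k (by omega)
      have e2 : w (k+1+1) = g (t (k+1)) := hwmid' (k+1) him
      rw [e1, e2] at hne
      have htpos : 0 < t (k+1) := by
        rw [← h0]; exact hstrict 0 (k+1) (by omega) him
      have hll : Function.leftLim g (t (k+1)) = g (t k) :=
        leftLim_eq_of_tendsto
          (pc_leftlim hconst hk (hlt k hk) le_rfl)
      refine ⟨⟨le_of_lt htpos, ?_⟩, ?_⟩
      · rw [← h1]
        rcases eq_or_lt_of_le him with h | h
        · rw [h]
        · exact le_of_lt (hstrict (k+1) m h le_rfl)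
      · rw [leftVal_of_ne g (ne_of_gt htpos), hll]
        exact Ne.symm hne
  have honejump : ∀ i j, i ≤ m → j ≤ m → w i ≠ w (i+1) → w j ≠ w (j+1) → i = j := by
    intro i j him hjm hi hj
    by_contra hne
    have d1 := hdisc i him hi
    have d2 := hdisc j hjm hj
    have htne : t i ≠ t j := by
      rcases Nat.lt_or_ge i j with h | h
      · exact ne_of_lt (hstrict i j h hjm)
      · have : j < i := by omega
        exact ne_of_gt (hstrict j i this him)
    have h2 : 1 < (Disc g).ncard := (Set.one_lt_ncard_iff hfin).2 ⟨t i, t j, d1, d2, htne⟩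
    omega
  have chain : ∀ a b, a ≤ b → (∀ i, a ≤ i → i < b → w i = w (i+1)) → w a = w b := by
    intro a b hab
    induction b with
    | zero =>
      intro _
      rw [Nat.le_zero.1 hab]
    | succ k ih =>
      intro hcon
      rcases eq_or_lt_of_le hab with h | h
      · rw [h]
      · have hk : w a = w k := ih (by omega) (fun i h1' h2' => hcon i h1' (by omega))
        rw [hk, hcon k (by omega) (by omega)]
  have wvals : ∀ j, j ≤ m + 1 → w j = 0 ∨ w j = g 1 := by
    intro j hj
    by_contra hc
    push_neg at hc
    obtain ⟨hc0, hc1⟩ := hc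
    have hex1 : ∃ i, i < j ∧ w i ≠ w (i+1) := by
      by_contra h; push_neg at h
      exact hc0 (by rw [← chain 0 j (Nat.zero_le j) (fun i _ h2 => h i h2), hw0])
    have hex2 : ∃ i, j ≤ i ∧ i ≤ m ∧ w i ≠ w (i+1) := by
      by_contra h; push_neg at h
      exact hc1 (by rw [chain j (m+1) hj (fun i h1' h2' => h i h1' (by omega)), hwlast])
    obtain ⟨i1, hi1j, hi1⟩ := hex1
    obtain ⟨i2, hji2, hi2m, hi2⟩ := hex2
    have : i1 = i2 := honejump i1 i2 (by omega) hi2m hi1 hi2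
    omega
  constructor
  · intro s hs
    rcases eq_or_lt_of_le hs.2 with h | h
    · right; rw [h]
    · obtain ⟨i, hi, hi1, hi2⟩ := pc_cover hm h0 h1 s hs.1 h
      rw [hconst i hi s hi1 hi2, ← hwmid' i (le_of_lt hi)]
      exact wvals (i+1) (by omega)
  · intro s hs
    obtain ⟨i, hi, hi1, hi2⟩ := pc_coverL hm h0 h1 s hs.1 hs.2
    have htd := pc_leftlim hconst hi hi1 hi2
    have hll : Function.leftLim g s = g (t i) :=
      leftLim_eq_of_tendsto htd
    refine ⟨by rw [hll]; exact htd, ?_⟩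
    rw [hll, ← hwmid' i (le_of_lt hi)]
    exact wvals (i+1) (by omega)

lemma pc_cadlag (hpc : PiecewiseConstant g) (z : ℝ) : IsCadlag (fun x => z * x + g x) := by
  obtain ⟨m, t, hm, h0, h1, hlt, hconst, hstrict⟩ := pc_data hpc
  constructor
  · intro s hs
    obtain ⟨i, hi, hi1, hi2⟩ := pc_cover hm h0 h1 s hs.1 hs.2
    have hgs : g s = g (t i) := hconst i hi s hi1 hi2
    have htg : Tendsto g (𝓝[>] s) (𝓝 (g s)) := by
      rw [hgs]
      apply Tendsto.congr' _ tendsto_const_nhds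
      filter_upwards [Ioo_mem_nhdsGT_of_mem (⟨le_rfl, hi2⟩ : s ∈ Ico s (t (i+1)))] with x hx
      exact (hconst i hi x (le_trans hi1 hx.1.le) hx.2).symm
    exact Tendsto.add (((continuous_const.mul continuous_id).tendsto s).mono_left
      nhdsWithin_le_nhds) htg
  · intro s hs
    obtain ⟨i, hi, hi1, hi2⟩ := pc_coverL hm h0 h1 s hs.1 hs.2
    exact ⟨z * s + g (t i), Tendsto.add (((continuous_const.mul continuous_id).tendsto s).mono_left
      nhdsWithin_le_nhds) (pc_leftlim hconst hi hi1 hi2)⟩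

lemma leftLim_add_linear {s z : ℝ} (hs : Tendsto g (𝓝[<] s) (𝓝 (Function.leftLim g s))) :
    Function.leftLim (fun x => z * x + g x) s = z * s + Function.leftLim g s :=
  leftLim_eq_of_tendsto
    (Tendsto.add (((continuous_const.mul continuous_id).tendsto s).mono_left
      nhdsWithin_le_nhds) hs)

end PC

noncomputable section Assembly

variable {ξ ζ : ℝ → ℝ}

def MSet (ξ ζ : ℝ → ℝ) : Set ℝ :=
  { r | ∃ u₁ v₁ u₂ v₂ : ℝ → ℝ, ParamRep ξ u₁ v₁ ∧ ParamRep ζ u₂ v₂ ∧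
    r = max (⨆ s : Icc (0:ℝ) 1, |u₁ s - u₂ s|) (⨆ s : Icc (0:ℝ) 1, |v₁ s - v₂ s|) }

lemma dM1_eq (ξ ζ : ℝ → ℝ) : dM1 ξ ζ = sInf (MSet ξ ζ) := rfl

lemma MSet_nonempty (hξ : IsCadlag ξ) (hζ : IsCadlag ζ) : (MSet ξ ζ).Nonempty := by
  obtain ⟨u₁, v₁, h₁⟩ := exists_paramRep hξ
  obtain ⟨u₂, v₂, h₂⟩ := exists_paramRep hζ
  exact ⟨_, u₁, v₁, u₂, v₂, h₁, h₂, rfl⟩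

lemma MSet_bound {r : ℝ} (hr : r ∈ MSet ξ ζ) :
    ∃ u₁ v₁ u₂ v₂ : ℝ → ℝ, ParamRep ξ u₁ v₁ ∧ ParamRep ζ u₂ v₂ ∧
      ∀ s ∈ Icc (0:ℝ) 1, |u₁ s - u₂ s| ≤ r ∧ |v₁ s - v₂ s| ≤ r := by
  obtain ⟨u₁, v₁, u₂, v₂, h₁, h₂, rfl⟩ := hr
  refine ⟨u₁, v₁, u₂, v₂, h₁, h₂, fun s hs => ⟨?_, ?_⟩⟩
  · exact le_trans (abs_sub_le_ciSup h₁.1 h₂.1 hs) (le_max_left _ _)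
  · exact le_trans (abs_sub_le_ciSup h₁.2.1 h₂.2.1 hs) (le_max_right _ _)

lemma cadlag_leftVal_ge (hξ : IsCadlag ξ) {B : ℝ} (hB : ∀ x ∈ Icc (0:ℝ) 1, B ≤ ξ x)
    (hB0 : B ≤ 0) {t : ℝ} (ht : t ∈ Icc (0:ℝ) 1) : B ≤ leftVal ξ t := by
  rcases eq_or_lt_of_le ht.1 with h | h
  · rw [← h, leftVal_zero]; exact hB0
  · rw [leftVal_of_ne ξ (ne_of_gt h)]
    obtain ⟨l, hl⟩ := hξ.2 t ⟨h, ht.2⟩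
    rw [leftLim_eq_of_tendsto hl]
    apply ge_of_tendsto hl
    filter_upwards [Ioo_mem_nhdsLT_of_mem (⟨h, le_rfl⟩ : t ∈ Ioc 0 t)] with x hx
    exact hB x ⟨hx.1.le, le_trans hx.2.le ht.2⟩

lemma cadlag_min_ge (hξ : IsCadlag ξ) {B : ℝ} (hB : ∀ x ∈ Icc (0:ℝ) 1, B ≤ ξ x)
    (hB0 : B ≤ 0) : ∀ t ∈ Icc (0:ℝ) 1, B ≤ min (leftVal ξ t) (ξ t) := fun t ht =>
  le_min (cadlag_leftVal_ge hξ hB hB0 ht) (hB t ht)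

lemma cadlag_exists_value (hζ : IsCadlag ζ) {t c γ : ℝ} (ht : t ∈ Icc (0:ℝ) 1)
    (hmin : min (leftVal ζ t) (ζ t) ≤ c) (hc : c < 0) (hγ : 0 < γ) :
    ∃ t' ∈ Icc (0:ℝ) 1, ζ t' ≤ c + γ := by
  rcases min_le_iff.1 hmin with hL | hV
  · rcases eq_or_lt_of_le ht.1 with h | h
    · rw [← h, leftVal_zero] at hL; linarith
    · rw [leftVal_of_ne ζ (ne_of_gt h)] at hL
      obtain ⟨l, hl⟩ := hζ.2 t ⟨h, ht.2⟩
      rw [leftLim_eq_of_tendsto hl] at hL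
      have hev1 : ∀ᶠ x in 𝓝[<] t, ζ x ∈ Icc (l - γ) (l + γ) :=
        hl (Icc_mem_nhds (by linarith) (by linarith))
      have hev2 : ∀ᶠ x in 𝓝[<] t, x ∈ Ioo (0:ℝ) t :=
        Ioo_mem_nhdsLT_of_mem (⟨h, le_rfl⟩ : t ∈ Ioc 0 t)
      obtain ⟨x, hx1, hx2⟩ := (hev1.and hev2).exists
      exact ⟨x, ⟨hx2.1.le, le_trans hx2.2.le ht.2⟩, by linarith [hx1.2]⟩
  · exact ⟨t, ht, by linarith⟩

lemma iInf_facts {ξ : ℝ → ℝ} {a : ℝ} (ha : 0 < a) (h : (⨅ t : Icc (0:ℝ) 1, ξ t) ≤ -a) :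
    BddBelow (Set.range fun t : Icc (0:ℝ) 1 => ξ t) ∧
    ∀ ε > 0, ∃ x ∈ Icc (0:ℝ) 1, ξ x < -a + ε := by
  haveI : Nonempty (Icc (0:ℝ) 1) := Set.Nonempty.to_subtype (nonempty_Icc.2 zero_le_one)
  have hbdd : BddBelow (Set.range fun t : Icc (0:ℝ) 1 => ξ t) := by
    by_contra hc
    rw [Real.iInf_of_not_bddBelow hc] at h
    linarith
  refine ⟨hbdd, fun ε hε => ?_⟩
  have hlt : sInf (Set.range fun t : Icc (0:ℝ) 1 => ξ t) < -a + ε :=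
    lt_of_le_of_lt h (by linarith)
  obtain ⟨y, hy, hy2⟩ := exists_lt_of_csInf_lt (Set.range_nonempty _) hlt
  obtain ⟨⟨x, hx⟩, rfl⟩ := hy
  exact ⟨x, hx, hy2⟩

lemma transfer_low {u₁ v₁ u₂ v₂ : ℝ → ℝ} (h₁ : ParamRep ξ u₁ v₁) (h₂ : ParamRep ζ u₂ v₂)
    {c r : ℝ} (hb : ∀ s ∈ Icc (0:ℝ) 1, |u₁ s - u₂ s| < r)
    {x : ℝ} (hx : x ∈ Icc (0:ℝ) 1) (hξx : ξ x ≤ c) :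
    ∃ t ∈ Icc (0:ℝ) 1, min (leftVal ζ t) (ζ t) ≤ c + r := by
  obtain ⟨s, hsI, hus, hvs⟩ := h₁.surj (self_mem_extGraph (ξ := ξ) hx)
  have hus' : u₁ s = ξ x := hus
  have hg := h₂.mem_graph hsI
  refine ⟨v₂ s, hg.1, ?_⟩
  have hlow : min (leftVal ζ (v₂ s)) (ζ (v₂ s)) ≤ u₂ s := hg.2.1
  have habs := abs_lt.1 (hb s hsI)
  linarith [habs.1, habs.2]

lemma transfer_bdd {u₁ v₁ u₂ v₂ : ℝ → ℝ} (h₁ : ParamRep ξ u₁ v₁) (h₂ : ParamRep ζ u₂ v₂)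
    {r B : ℝ} (hb : ∀ s ∈ Icc (0:ℝ) 1, |u₁ s - u₂ s| < r)
    (hmin : ∀ t ∈ Icc (0:ℝ) 1, B ≤ min (leftVal ξ t) (ξ t)) :
    ∀ x ∈ Icc (0:ℝ) 1, B - r ≤ ζ x := by
  intro x hx
  obtain ⟨s, hsI, hus, hvs⟩ := h₂.surj (self_mem_extGraph (ξ := ζ) hx)
  have hus' : u₂ s = ζ x := hus
  have hg := h₁.mem_graph hsI
  have h1 : B ≤ u₁ s := le_trans (hmin (v₁ s) hg.1) hg.2.1
  have habs := abs_lt.1 (hb s hsI)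
  linarith [habs.1, habs.2]

end Assembly

/-- **Barrier-option rare-event set (Section 4)**: for `aP > max{μ,0}` and `aM > max{−μ,0}`,
the set `E = {ξ : ξ(1) ≥ aP, inf_{t∈[0,1]} ξ(t) ≤ −aM}` is (sequentially) closed in the `M₁'`
topology on `D[0,1]`, and is bounded away in `d_{M₁'}` from `D̲^μ_{≪2}` (the functions
`μt + x·1_{[y,1]}(t)` together with `μt`). -/
theorem barrier_set_closed_and_bounded_away
    (mu aP aM : ℝ) (haP : max mu 0 < aP) (haM : max (-mu) 0 < aM) :
    (∀ (ξ : ℕ → ℝ → ℝ) (ζ : ℝ → ℝ),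
      (∀ n, IsCadlag (ξ n) ∧ aP ≤ ξ n 1 ∧ (⨅ t : Icc (0:ℝ) 1, ξ n t) ≤ -aM) →
      IsCadlag ζ →
      Filter.Tendsto (fun n => dM1 (ξ n) ζ) Filter.atTop (nhds 0) →
      aP ≤ ζ 1 ∧ (⨅ t : Icc (0:ℝ) 1, ζ t) ≤ -aM) ∧
    ∃ r > (0:ℝ), ∀ ξ₁ : ℝ → ℝ, IsCadlag ξ₁ → aP ≤ ξ₁ 1 → (⨅ t : Icc (0:ℝ) 1, ξ₁ t) ≤ -aM →
      ∀ ξ₂ ∈ DllZ mu 2, r ≤ dM1 ξ₁ ξ₂ := by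
  have haP1 : mu < aP := lt_of_le_of_lt (le_max_left _ _) haP
  have haP0 : 0 < aP := lt_of_le_of_lt (le_max_right _ _) haP
  have haM0 : 0 < aM := lt_of_le_of_lt (le_max_right _ _) haM
  have haM1 : -mu < aM := lt_of_le_of_lt (le_max_left _ _) haM
  have hmin0mu : 0 < aM + min 0 mu := by
    rcases le_total (0:ℝ) mu with h | h
    · rw [min_eq_left h]; linarith
    · rw [min_eq_right h]; linarith
  constructor
  · intro ξ ζ hmem hζ htend
    have extract : ∀ ε > 0, ∃ n, ∃ u₁ v₁ u₂ v₂ : ℝ → ℝ,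
        ParamRep (ξ n) u₁ v₁ ∧ ParamRep ζ u₂ v₂ ∧
        ∀ s ∈ Icc (0:ℝ) 1, |u₁ s - u₂ s| < ε ∧ |v₁ s - v₂ s| < ε := by
      intro ε hε
      obtain ⟨n, hn⟩ := (htend.eventually (eventually_mem_set.2 (Iio_mem_nhds hε))).exists
      rw [dM1_eq] at hn
      obtain ⟨r', hr'mem, hr'lt⟩ := exists_lt_of_csInf_lt (MSet_nonempty (hmem n).1 hζ) hn
      obtain ⟨u₁, v₁, u₂, v₂, h₁, h₂, hb⟩ := MSet_bound hr'mem
      exact ⟨n, u₁, v₁, u₂, v₂, h₁, h₂, fun s hs =>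
        ⟨lt_of_le_of_lt (hb s hs).1 hr'lt, lt_of_le_of_lt (hb s hs).2 hr'lt⟩⟩
    constructor
    · apply le_of_forall_sub_le
      intro ε hε
      obtain ⟨n, u₁, v₁, u₂, v₂, h₁, h₂, hb⟩ := extract ε hε
      have h11 : u₁ 1 = ξ n 1 := h₁.u_one
      have h21 : u₂ 1 = ζ 1 := h₂.u_one
      have habs := abs_lt.1 ((hb 1 ⟨zero_le_one, le_rfl⟩).1)
      rw [h11, h21] at habs
      linarith [(hmem n).2.1, habs.1, habs.2]
    · haveI : Nonempty (Icc (0:ℝ) 1) := Set.Nonempty.to_subtype (nonempty_Icc.2 zero_le_one)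
      obtain ⟨n₀, u₁, v₁, u₂, v₂, h₁, h₂, hb⟩ := extract 1 one_pos
      obtain ⟨hbdd₀, -⟩ := iInf_facts haM0 (hmem n₀).2.2
      set B := sInf (Set.range fun t : Icc (0:ℝ) 1 => ξ n₀ t) with hB
      have hBle : ∀ x ∈ Icc (0:ℝ) 1, min B 0 ≤ ξ n₀ x := fun x hx =>
        le_trans (min_le_left _ _) (csInf_le hbdd₀ ⟨⟨x, hx⟩, rfl⟩)
      have hminB := cadlag_min_ge (hmem n₀).1 hBle (min_le_right _ _)
      have hζlow : ∀ x ∈ Icc (0:ℝ) 1, min B 0 - 1 ≤ ζ x :=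
        transfer_bdd h₁ h₂ (fun s hs => (hb s hs).1) hminB
      have hbddζ : BddBelow (Set.range fun t : Icc (0:ℝ) 1 => ζ t) := by
        refine ⟨min B 0 - 1, ?_⟩
        rintro y ⟨⟨x, hx⟩, rfl⟩
        exact hζlow x hx
      have hclaim : ∀ ε, 0 < ε → ε < aM → (⨅ t : Icc (0:ℝ) 1, ζ t) ≤ -aM + ε := by
        intro ε hε hεaM
        obtain ⟨n, u₁', v₁', u₂', v₂', h₁', h₂', hb'⟩ := extract (ε/3) (by linarith)
        obtain ⟨-, hex⟩ := iInf_facts haM0 (hmem n).2.2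
        obtain ⟨x, hxI, hxv⟩ := hex (ε/3) (by linarith)
        obtain ⟨t, htI, hmint⟩ := transfer_low h₁' h₂' (fun s hs => (hb' s hs).1) hxI hxv.le
        obtain ⟨t', ht'I, ht'⟩ := cadlag_exists_value hζ htI
          (le_trans hmint (by linarith : -aM + ε/3 + ε/3 ≤ -aM + 2*ε/3)) (by linarith)
          (show 0 < ε/3 by linarith)
        calc (⨅ t : Icc (0:ℝ) 1, ζ t) ≤ ζ t' := ciInf_le hbddζ ⟨t', ht'I⟩
          _ ≤ -aM + ε := by linarith
      apply le_of_forall_sub_le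
      intro ε hε
      rcases lt_or_ge ε aM with h | h
      · linarith [hclaim ε hε h]
      · linarith [hclaim (aM/2) (by linarith) (by linarith)]
  · refine ⟨min (aP - mu) (aM + min 0 mu) / 4,
      by have h := lt_min (show (0:ℝ) < aP - mu by linarith) hmin0mu; linarith, ?_⟩
    intro ξ₁ hcad hξP hinf ξ₂ hξ₂
    obtain ⟨g, ⟨hpc, hfin, hcard⟩, rfl⟩ := hξ₂
    set r₀ := min (aP - mu) (aM + min 0 mu) with hr₀
    have hr₀pos : 0 < r₀ := lt_min (by linarith) hmin0mu
    have hr₀1 : r₀ ≤ aP - mu := min_le_left _ _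
    have hr₀2 : r₀ ≤ aM + min 0 mu := min_le_right _ _
    have hcad₂ : IsCadlag (fun t => mu * t + g t) := pc_cadlag hpc mu
    rw [dM1_eq]
    apply le_csInf (MSet_nonempty hcad hcad₂)
    intro b hbmem
    by_contra hcon
    push_neg at hcon
    obtain ⟨u₁, v₁, u₂, v₂, h₁, h₂, hbb⟩ := MSet_bound hbmem
    have hbb' : ∀ s ∈ Icc (0:ℝ) 1, |u₁ s - u₂ s| < r₀/4 :=
      fun s hs => lt_of_le_of_lt (hbb s hs).1 hcon
    have h11 : u₁ 1 = ξ₁ 1 := h₁.u_one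
    have h21 : u₂ 1 = mu * 1 + g 1 := h₂.u_one
    have hend := abs_lt.1 (hbb' 1 ⟨zero_le_one, le_rfl⟩)
    rw [h11, h21] at hend
    have hmu1 : mu * 1 = mu := mul_one mu
    have hg1 : 0 < g 1 := by linarith [hend.1, hend.2, hξP]
    obtain ⟨hvals, hlefts⟩ := dll2_facts hpc hfin hcard
    have hminb : ∀ t ∈ Icc (0:ℝ) 1,
        min 0 mu ≤ min (leftVal (fun x => mu * x + g x) t) (mu * t + g t) := by
      intro t ht
      have hmut : min 0 mu ≤ mu * t := by
        rcases le_total 0 mu with h | h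
        · calc min 0 mu ≤ 0 := min_le_left _ _
            _ ≤ mu * t := mul_nonneg h ht.1
        · calc min 0 mu ≤ mu := min_le_right _ _
            _ ≤ mu * t := by nlinarith [ht.2]
      apply le_min
      · rcases eq_or_lt_of_le ht.1 with h | h
        · rw [← h, leftVal_zero]; exact min_le_left _ _
        · rw [leftVal_of_ne _ (ne_of_gt h)]
          obtain ⟨htd, hlv⟩ := hlefts t ⟨h, ht.2⟩
          rw [leftLim_add_linear htd]
          rcases hlv with hl | hl <;> rw [hl] <;> linarith
      · rcases hvals t ht with hv | hv <;> rw [hv] <;> linarith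
    obtain ⟨hbddξ, hex⟩ := iInf_facts haM0 hinf
    obtain ⟨x, hxI, hxv⟩ := hex (r₀/4) (by linarith)
    obtain ⟨t, htI, hmint⟩ := transfer_low h₁ h₂ hbb' hxI hxv.le
    have hfinal : min 0 mu ≤ -aM + r₀/4 + r₀/4 := le_trans (hminb t htI) hmint
    linarith
end
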